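/- arXiv:1307.0332 — 6 statements merged into one kernel-verified Lean document; each statement's English description precedes it below -/
import Mathlib

section
/- Let G = (N, E) be an unweighted graph, let v be the characteristic function of the matching game MG(G), and let i, j ∈ N be distinct vertices such that for every vertex k ∈ N \ {i, j}, k is adjacent to i if and only if k is adjacent to j. Then i and j are symmetric players in (N, v), i.e., v(S ∪ {i}) = v(S ∪ {j}) for every coalition S ⊆ N \ {i, j}. -/
attribute [local instance] Classical.propDecidable

/-- `M` is a matching of the subgraph of the graph with edge set `E` induced by
the vertex set `S`. -/
def IsMatchingOn {V : Type*} (E : Finset (Sym2 V)) (S : Finset V) (M : Finset (Sym2 V)) : Prop :=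
  M ⊆ E ∧ (∀ e ∈ M, ¬ e.IsDiag) ∧ (∀ e ∈ M, ∀ x ∈ e, x ∈ S) ∧
    (∀ e ∈ M, ∀ f ∈ M, e ≠ f → ∀ x ∈ e, x ∉ f)

/-- Value of a coalition `S` in the weighted matching game on the graph with edge set `E` and
weights `w`: the maximum total weight of a matching in the induced subgraph on `S`. -/
noncomputable def matchVal {V : Type*} (E : Finset (Sym2 V)) (w : Sym2 V → ℝ)
    (S : Finset V) : ℝ :=
  sSup {x : ℝ | ∃ M : Finset (Sym2 V), IsMatchingOn E S M ∧ x = ∑ e ∈ M, w e}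

/-- Value of a coalition `S` in the unweighted matching game: the maximum cardinality of a
matching in the induced subgraph on `S`. -/
noncomputable def umatchVal {V : Type*} (E : Finset (Sym2 V)) (S : Finset V) : ℕ :=
  sSup {k : ℕ | ∃ M : Finset (Sym2 V), IsMatchingOn E S M ∧ k = M.card}

/-- The Shapley value of player `i` in the cooperative game with (finite) player set `N` and
characteristic function `v`. -/
noncomputable def shapley {V : Type*} [DecidableEq V] (N : Finset V) (v : Finset V → ℝ)
    (i : V) : ℝ :=
  (1 / (Nat.factorial N.card) : ℝ) *
    ∑ S ∈ (N.erase i).powerset,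
      (Nat.factorial S.card : ℝ) * (Nat.factorial (N.card - S.card - 1) : ℝ) *
        (v (insert i S) - v S)

/-- The raw Shapley value of player `i` in the cooperative game with player set `N` and
characteristic function `v`. -/
noncomputable def rawShapley {V : Type*} [DecidableEq V] (N : Finset V) (v : Finset V → ℝ)
    (i : V) : ℝ :=
  ∑ S ∈ (N.erase i).powerset,
    (Nat.factorial S.card : ℝ) * (Nat.factorial (N.card - S.card - 1) : ℝ) *
      (v (insert i S) - v S)

lemma map_matching_aux {V : Type*} [DecidableEq V]
    (E : Finset (Sym2 V)) (hloop : ∀ e ∈ E, ¬ e.IsDiag)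
    (i j : V) (hij : i ≠ j)
    (hadj : ∀ k : V, k ≠ i → k ≠ j → (s(k, i) ∈ E → s(k, j) ∈ E))
    (S : Finset V) (hiS : i ∉ S) (hjS : j ∉ S)
    (M : Finset (Sym2 V)) (hM : IsMatchingOn E (insert i S) M) :
    IsMatchingOn E (insert j S) (M.image (Sym2.map (Equiv.swap i j))) := by
  obtain ⟨hME, hMd, hMS, hMdisj⟩ := hM
  have hswap : ∀ e ∈ M, ∀ x ∈ e, Equiv.swap i j x = if x = i then j else x := by
    intro e he x hx
    have hxS : x ∈ insert i S := hMS e he x hx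
    by_cases hxi : x = i
    · simp [hxi]
    · have hxj : x ≠ j := by
        rintro rfl
        rcases Finset.mem_insert.mp hxS with h | h
        · exact hij h.symm
        · exact hjS h
      simp [hxi, hxj, Equiv.swap_apply_of_ne_of_ne]
  refine ⟨?_, ?_, ?_, ?_⟩
  · intro e' he'
    obtain ⟨e, he, rfl⟩ := Finset.mem_image.mp he'
    obtain ⟨a, b, rfl⟩ : ∃ a b, e = s(a, b) := by
      refine ⟨e.out.1, e.out.2, ?_⟩
      rw [Sym2.mk, Prod.mk.eta, e.out_eq]
    have ha := hswap _ he a (Sym2.mem_mk_left a b)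
    have hb := hswap _ he b (Sym2.mem_mk_right a b)
    have hab : a ≠ b := by
      intro h; exact hMd _ he (by simp [h])
    rw [Sym2.map_pair_eq, ha, hb]
    by_cases hai : a = i
    · have hbi : b ≠ i := fun h => hab (hai.trans h.symm)
      have hbj : b ≠ j := by
        rintro rfl
        rcases Finset.mem_insert.mp (hMS _ he b (Sym2.mem_mk_right a b)) with h | h
        · exact hij h.symm
        · exact hjS h
      simp only [hai, if_pos rfl, if_neg hbi]
      have := hadj b hbi hbj (by rw [Sym2.eq_swap]; rw [hai] at he; exact hME he)
      rw [Sym2.eq_swap]; exact this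
    · by_cases hbi : b = i
      · have haj : a ≠ j := by
          rintro rfl
          rcases Finset.mem_insert.mp (hMS _ he a (Sym2.mem_mk_left a b)) with h | h
          · exact hij h.symm
          · exact hjS h
        simp only [if_neg hai, hbi, if_pos rfl]
        exact hadj a hai haj (by rw [hbi] at he; exact hME he)
      · simp only [if_neg hai, if_neg hbi]
        exact hME he
  · intro e' he'
    obtain ⟨e, he, rfl⟩ := Finset.mem_image.mp he'
    rw [Sym2.isDiag_map (Equiv.swap i j).injective]
    exact hMd e he
  · intro e' he' x hx
    obtain ⟨e, he, rfl⟩ := Finset.mem_image.mp he'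
    obtain ⟨a, ha, rfl⟩ := Sym2.mem_map.mp hx
    rw [hswap e he a ha]
    by_cases hai : a = i
    · simp [hai]
    · rw [if_neg hai]
      rcases Finset.mem_insert.mp (hMS e he a ha) with h | h
      · exact absurd h hai
      · exact Finset.mem_insert_of_mem h
  · intro e' he' f' hf' hef x hx hxf
    obtain ⟨e, he, rfl⟩ := Finset.mem_image.mp he'
    obtain ⟨f, hf, rfl⟩ := Finset.mem_image.mp hf'
    have hne : e ≠ f := fun h => hef (by rw [h])
    obtain ⟨a, ha, rfl⟩ := Sym2.mem_map.mp hx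
    obtain ⟨b, hb, hba⟩ := Sym2.mem_map.mp hxf
    have : b = a := (Equiv.swap i j).injective hba
    exact hMdisj e he f hf hne a ha (this ▸ hb)

/-- If two distinct vertices `i` and `j` of an unweighted graph have the same
neighbours among the other vertices, then they are symmetric players in the matching game. -/
theorem symmetric_of_same_neighbours {V : Type*} [Fintype V] [DecidableEq V]
    (E : Finset (Sym2 V)) (hloop : ∀ e ∈ E, ¬ e.IsDiag)
    (i j : V) (hij : i ≠ j)
    (hadj : ∀ k : V, k ≠ i → k ≠ j → (s(k, i) ∈ E ↔ s(k, j) ∈ E))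
    (S : Finset V) (hiS : i ∉ S) (hjS : j ∉ S) :
    umatchVal E (insert i S) = umatchVal E (insert j S) := by
  unfold umatchVal
  congr 1
  ext k
  constructor
  · rintro ⟨M, hM, rfl⟩
    refine ⟨M.image (Sym2.map (Equiv.swap i j)),
      map_matching_aux E hloop i j hij (fun k hki hkj => (hadj k hki hkj).mp) S hiS hjS M hM, ?_⟩
    rw [Finset.card_image_of_injective _ (Sym2.map.injective (Equiv.swap i j).injective)]
  · rintro ⟨M, hM, rfl⟩
    have := map_matching_aux E hloop j i hij.symm
      (fun k hkj hki => (hadj k hki hkj).mpr) S hjS hiS M hM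
    rw [Equiv.swap_comm] at this
    exact ⟨_, this,
      (Finset.card_image_of_injective _ (Sym2.map.injective (Equiv.swap i j).injective)).symm⟩
end

section
/- Let P_n be the unweighted path graph on vertex set {1, …, n} and let v be the characteristic function of the matching game MG(P_n). Let i ∈ {1, …, n} and let S ⊆ {1, …, n} \ {i} be a coalition such that i − 1 ∉ S, and such that for some m ≥ 1 the vertices i + 1, …, i + m all belong to S while i + m + 1 ∉ S (vertices outside {1, …, n} being treated as absent). Then i is pivotal for S if and only if m is odd. -/
attribute [local instance] Classical.propDecidable

/-- Edge set of the path graph `P_n` on vertex set `{1, …, n}`. -/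
def pathEdges (n : ℕ) : Finset (Sym2 ℕ) :=
  (Finset.Icc 1 (n - 1)).image (fun j : ℕ => s(j, j + 1))

namespace PivotalAux

lemma empty_matching (E S : Finset _) : IsMatchingOn E S (∅ : Finset (Sym2 ℕ)) := by
  refine ⟨Finset.empty_subset _, ?_, ?_, ?_⟩ <;> simp

lemma mem_zero (E S : Finset _) :
    (0 : ℕ) ∈ {k : ℕ | ∃ M : Finset (Sym2 ℕ), IsMatchingOn E S M ∧ k = M.card} :=
  ⟨∅, empty_matching E S, by simp⟩

lemma bdd (E : Finset (Sym2 ℕ)) (S : Finset ℕ) :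
    BddAbove {k : ℕ | ∃ M : Finset (Sym2 ℕ), IsMatchingOn E S M ∧ k = M.card} := by
  refine ⟨E.card, ?_⟩
  rintro k ⟨M, hM, rfl⟩
  exact Finset.card_le_card hM.1

lemma le_umatchVal {E : Finset (Sym2 ℕ)} {S : Finset ℕ} {M : Finset (Sym2 ℕ)}
    (h : IsMatchingOn E S M) : M.card ≤ umatchVal E S :=
  le_csSup (bdd E S) ⟨M, h, rfl⟩

lemma umatchVal_le {E : Finset (Sym2 ℕ)} {S : Finset ℕ} {B : ℕ}
    (h : ∀ M, IsMatchingOn E S M → M.card ≤ B) : umatchVal E S ≤ B := by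
  refine csSup_le ⟨0, mem_zero E S⟩ ?_
  rintro k ⟨M, hM, rfl⟩
  exact h M hM

lemma exists_max (E : Finset (Sym2 ℕ)) (S : Finset ℕ) :
    ∃ M, IsMatchingOn E S M ∧ M.card = umatchVal E S := by
  obtain ⟨M, hM, hk⟩ := Nat.sSup_mem ⟨0, mem_zero E S⟩ (bdd E S)
  exact ⟨M, hM, hk.symm⟩

lemma two_mul_card_le {E : Finset (Sym2 ℕ)} {S : Finset ℕ} {M : Finset (Sym2 ℕ)}
    (h : IsMatchingOn E S M) : 2 * M.card ≤ S.card := by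
  classical
  obtain ⟨hME, hdiag, hmem, hdisj⟩ := h
  have hdis : ∀ e ∈ M, ∀ f ∈ M, e ≠ f →
      Disjoint (S.filter (· ∈ e)) (S.filter (· ∈ f)) := by
    intro e he f hf hef
    rw [Finset.disjoint_left]
    intro x hx hx'
    simp only [Finset.mem_filter] at hx hx'
    exact hdisj e he f hf hef x hx.2 hx'.2
  have h2 : ∀ e ∈ M, (S.filter (· ∈ e)).card = 2 := by
    intro e he
    induction e using Sym2.ind with
    | _ a b =>
      have hab : a ≠ b := by
        intro hh
        exact hdiag _ he (by simp [hh, Sym2.mk_isDiag_iff])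
      have ha : a ∈ S := hmem _ he a (by simp)
      have hb : b ∈ S := hmem _ he b (by simp)
      have : S.filter (· ∈ s(a, b)) = {a, b} := by
        ext x
        simp only [Finset.mem_filter, Sym2.mem_iff, Finset.mem_insert, Finset.mem_singleton]
        constructor
        · rintro ⟨_, h | h⟩ <;> simp [h]
        · rintro (h | h) <;> subst h <;> simp [ha, hb]
      rw [this, Finset.card_pair hab]
  have hsub : M.biUnion (fun e => S.filter (· ∈ e)) ⊆ S :=
    Finset.biUnion_subset.2 fun e _ => Finset.filter_subset _ _
  calc 2 * M.card = ∑ e ∈ M, (S.filter (· ∈ e)).card := by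
        rw [Finset.sum_congr rfl h2]; simp [mul_comm]
    _ = (M.biUnion (fun e => S.filter (· ∈ e))).card := (Finset.card_biUnion hdis).symm
    _ ≤ S.card := Finset.card_le_card hsub

lemma umatchVal_union (E : Finset (Sym2 ℕ)) (A B : Finset ℕ) (hd : Disjoint A B)
    (hcross : ∀ e ∈ E, (∃ x ∈ e, x ∈ A) → (∃ x ∈ e, x ∈ B) → False) :
    umatchVal E (A ∪ B) = umatchVal E A + umatchVal E B := by
  classical
  apply le_antisymm
  · apply umatchVal_le
    intro M hM
    obtain ⟨hME, hdiag, hmem, hdisj⟩ := hM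
    set MA := M.filter (fun e => ∀ x ∈ e, x ∈ A) with hMA
    set MB := M.filter (fun e => ¬ ∀ x ∈ e, x ∈ A) with hMB
    have hBmem : ∀ e ∈ MB, ∀ x ∈ e, x ∈ B := by
      intro e he x hx
      simp only [hMB, Finset.mem_filter] at he
      obtain ⟨heM, hnot⟩ := he
      push_neg at hnot
      obtain ⟨y, hy, hyA⟩ := hnot
      have hyB : y ∈ B := by
        have := hmem e heM y hy
        rcases Finset.mem_union.1 this with h | h
        · exact absurd h hyA
        · exact h
      by_contra hxB
      have hxA : x ∈ A := by
        have := hmem e heM x hx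
        rcases Finset.mem_union.1 this with h | h
        · exact h
        · exact absurd h hxB
      exact hcross e (hME heM) ⟨x, hx, hxA⟩ ⟨y, hy, hyB⟩
    have hMAm : IsMatchingOn E A MA := by
      refine ⟨fun e he => hME (Finset.mem_filter.1 he).1,
        fun e he => hdiag e (Finset.mem_filter.1 he).1,
        fun e he => (Finset.mem_filter.1 he).2,
        fun e he f hf hef => hdisj e (Finset.mem_filter.1 he).1 f (Finset.mem_filter.1 hf).1 hef⟩
    have hMBm : IsMatchingOn E B MB := by
      refine ⟨fun e he => hME (Finset.mem_filter.1 he).1,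
        fun e he => hdiag e (Finset.mem_filter.1 he).1,
        hBmem,
        fun e he f hf hef => hdisj e (Finset.mem_filter.1 he).1 f (Finset.mem_filter.1 hf).1 hef⟩
    have hcard : MA.card + MB.card = M.card :=
      Finset.card_filter_add_card_filter_not _
    calc M.card = MA.card + MB.card := hcard.symm
      _ ≤ umatchVal E A + umatchVal E B :=
          Nat.add_le_add (le_umatchVal hMAm) (le_umatchVal hMBm)
  · obtain ⟨MA, hMA, hcA⟩ := exists_max E A
    obtain ⟨MB, hMB, hcB⟩ := exists_max E B
    have hdisjM : Disjoint MA MB := by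
      rw [Finset.disjoint_left]
      intro e heA heB
      obtain ⟨x, hx⟩ : ∃ x, x ∈ e := by
        induction e using Sym2.ind with
        | _ a b => exact ⟨a, by simp⟩
      exact Finset.disjoint_left.1 hd (hMA.2.2.1 e heA x hx) (hMB.2.2.1 e heB x hx)
    have hm : IsMatchingOn E (A ∪ B) (MA ∪ MB) := by
      refine ⟨Finset.union_subset hMA.1 hMB.1, ?_, ?_, ?_⟩
      · intro e he
        rcases Finset.mem_union.1 he with h | h
        · exact hMA.2.1 e h
        · exact hMB.2.1 e h
      · intro e he x hx
        rcases Finset.mem_union.1 he with h | h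
        · exact Finset.mem_union_left _ (hMA.2.2.1 e h x hx)
        · exact Finset.mem_union_right _ (hMB.2.2.1 e h x hx)
      · intro e he f hf hef x hx hxf
        rcases Finset.mem_union.1 he with h1 | h1 <;> rcases Finset.mem_union.1 hf with h2 | h2
        · exact hMA.2.2.2 e h1 f h2 hef x hx hxf
        · exact Finset.disjoint_left.1 hd (hMA.2.2.1 e h1 x hx) (hMB.2.2.1 f h2 x hxf)
        · exact Finset.disjoint_left.1 hd (hMA.2.2.1 f h2 x hxf) (hMB.2.2.1 e h1 x hx)
        · exact hMB.2.2.2 e h1 f h2 hef x hx hxf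
    calc umatchVal E A + umatchVal E B = (MA ∪ MB).card := by
          rw [Finset.card_union_of_disjoint hdisjM, hcA, hcB]
      _ ≤ umatchVal E (A ∪ B) := le_umatchVal hm

lemma mem_pathEdges {n : ℕ} {e : Sym2 ℕ} :
    e ∈ pathEdges n ↔ ∃ j, 1 ≤ j ∧ j + 1 ≤ n ∧ e = s(j, j + 1) := by
  unfold pathEdges
  simp only [Finset.mem_image, Finset.mem_Icc]
  constructor
  · rintro ⟨j, ⟨h1, h2⟩, rfl⟩
    exact ⟨j, h1, by omega, rfl⟩
  · rintro ⟨j, h1, h2, rfl⟩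
    exact ⟨j, ⟨h1, by omega⟩, rfl⟩

lemma umatchVal_Icc (n a b : ℕ) (ha : 1 ≤ a) (hb : b ≤ n) (hab : a ≤ b) :
    umatchVal (pathEdges n) (Finset.Icc a b) = (b + 1 - a) / 2 := by
  apply le_antisymm
  · apply umatchVal_le
    intro M hM
    have := two_mul_card_le hM
    rw [Nat.card_Icc] at this
    omega
  · set k := (b + 1 - a) / 2 with hk
    set M : Finset (Sym2 ℕ) := (Finset.range k).image (fun j => s(a + 2 * j, a + 2 * j + 1))
      with hMdef
    have hmk : ∀ {x y : ℕ}, s(x, x + 1) = s(y, y + 1) → x = y := by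
      intro x y h
      rw [Sym2.eq_iff] at h
      rcases h with h | h <;> simp_all <;> omega
    have hcard : M.card = k := by
      rw [hMdef, Finset.card_image_of_injOn, Finset.card_range]
      intro x _ y _ h
      have := hmk h
      omega
    have hmem2 : ∀ e ∈ M, ∃ j < k, e = s(a + 2 * j, a + 2 * j + 1) := by
      intro e he
      simp only [hMdef, Finset.mem_image, Finset.mem_range] at he
      obtain ⟨j, hj, rfl⟩ := he
      exact ⟨j, hj, rfl⟩
    have hm : IsMatchingOn (pathEdges n) (Finset.Icc a b) M := by
      refine ⟨?_, ?_, ?_, ?_⟩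
      · intro e he
        obtain ⟨j, hj, rfl⟩ := hmem2 e he
        exact mem_pathEdges.2 ⟨a + 2 * j, by omega, by omega, rfl⟩
      · intro e he
        obtain ⟨j, hj, rfl⟩ := hmem2 e he
        simp [Sym2.mk_isDiag_iff]
      · intro e he x hx
        obtain ⟨j, hj, rfl⟩ := hmem2 e he
        rw [Sym2.mem_iff] at hx
        rw [Finset.mem_Icc]
        rcases hx with rfl | rfl <;> omega
      · intro e he f hf hef x hx hxf
        obtain ⟨j, hj, rfl⟩ := hmem2 e he
        obtain ⟨j', hj', rfl⟩ := hmem2 f hf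
        have hjj : j ≠ j' := fun h => hef (by rw [h])
        rw [Sym2.mem_iff] at hx hxf
        rcases hx with rfl | rfl <;> rcases hxf with h | h <;> omega
    calc k = M.card := hcard.symm
      _ ≤ umatchVal (pathEdges n) (Finset.Icc a b) := le_umatchVal hm

end PivotalAux

open PivotalAux in
/-- In the matching game on the path `P_n`, if the coalition `S` does not
contain `i - 1`, contains the segment `i+1, …, i+m` (`m ≥ 1`) and does not contain `i+m+1`,
then `i` is pivotal for `S` iff `m` is odd. -/
theorem pivotal_path_right_segment (n : ℕ) (i : ℕ) (hi : i ∈ Finset.Icc 1 n)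
    (S : Finset ℕ) (hS : S ⊆ Finset.Icc 1 n) (hiS : i ∉ S)
    (hleft : i - 1 ∉ S)
    (m : ℕ) (hm : 1 ≤ m)
    (hseg : ∀ t, 1 ≤ t → t ≤ m → i + t ∈ S)
    (hend : i + m + 1 ∉ S) :
    (umatchVal (pathEdges n) (insert i S) = umatchVal (pathEdges n) S + 1) ↔ Odd m := by
  classical
  rw [Finset.mem_Icc] at hi
  have hin : i + m ≤ n := by
    have := hS (hseg m hm le_rfl)
    rw [Finset.mem_Icc] at this
    omega
  set R : Finset ℕ := S \ Finset.Icc (i + 1) (i + m) with hR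
  have hRmem : ∀ x, x ∈ R ↔ x ∈ S ∧ ¬ (i + 1 ≤ x ∧ x ≤ i + m) := by
    intro x
    simp [hR, Finset.mem_sdiff, Finset.mem_Icc]
  have hSdec : S = R ∪ Finset.Icc (i + 1) (i + m) := by
    ext x
    simp only [Finset.mem_union, hRmem, Finset.mem_Icc]
    constructor
    · intro hx
      by_cases h : i + 1 ≤ x ∧ x ≤ i + m
      · exact Or.inr h
      · exact Or.inl ⟨hx, h⟩
    · rintro (⟨hx, _⟩ | ⟨h1, h2⟩)
      · exact hx
      · have := hseg (x - i) (by omega) (by omega)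
        rwa [show i + (x - i) = x by omega] at this
  have hIdec : insert i S = R ∪ Finset.Icc i (i + m) := by
    ext x
    simp only [Finset.mem_insert, Finset.mem_union, hRmem, Finset.mem_Icc]
    constructor
    · rintro (rfl | hx)
      · exact Or.inr ⟨le_rfl, by omega⟩
      · by_cases h : i + 1 ≤ x ∧ x ≤ i + m
        · exact Or.inr ⟨by omega, h.2⟩
        · exact Or.inl ⟨hx, h⟩
    · rintro (⟨hx, _⟩ | ⟨h1, h2⟩)
      · exact Or.inr hx
      · by_cases h : x = i
        · exact Or.inl h
        · refine Or.inr ?_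
          have := hseg (x - i) (by omega) (by omega)
          rwa [show i + (x - i) = x by omega] at this
  have hRn : ∀ x ∈ R, x ∉ Finset.Icc i (i + m + 1) := by
    intro x hx
    rw [hRmem] at hx
    rw [Finset.mem_Icc]
    intro ⟨h1, h2⟩
    rcases Nat.lt_or_ge x (i + 1) with h | h
    · have : x = i := by omega
      exact hiS (this ▸ hx.1)
    · rcases Nat.lt_or_ge x (i + m + 1) with h' | h'
      · exact hx.2 ⟨h, by omega⟩
      · have : x = i + m + 1 := by omega
        exact hend (this ▸ hx.1)
  -- cross-edge conditions
  have hcross1 : ∀ e ∈ pathEdges n, (∃ x ∈ e, x ∈ R) →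
      (∃ x ∈ e, x ∈ Finset.Icc (i + 1) (i + m)) → False := by
    rintro e he ⟨x, hx, hxR⟩ ⟨y, hy, hyI⟩
    obtain ⟨j, hj1, hj2, rfl⟩ := mem_pathEdges.1 he
    rw [Sym2.mem_iff] at hx hy
    have hxn := hRn x hxR
    rw [Finset.mem_Icc] at hxn
    rw [Finset.mem_Icc] at hyI
    have hxS := (hRmem x).1 hxR
    rcases hx with rfl | rfl <;> rcases hy with rfl | rfl <;> omega
  have hcross2 : ∀ e ∈ pathEdges n, (∃ x ∈ e, x ∈ R) →
      (∃ x ∈ e, x ∈ Finset.Icc i (i + m)) → False := by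
    rintro e he ⟨x, hx, hxR⟩ ⟨y, hy, hyI⟩
    obtain ⟨j, hj1, hj2, rfl⟩ := mem_pathEdges.1 he
    rw [Sym2.mem_iff] at hx hy
    have hxn := hRn x hxR
    rw [Finset.mem_Icc] at hxn
    rw [Finset.mem_Icc] at hyI
    -- need i - 1 ∉ S as well
    have hxS := (hRmem x).1 hxR
    have him1 : x ≠ i - 1 := fun h => hleft (h ▸ hxS.1)
    rcases hx with rfl | rfl <;> rcases hy with rfl | rfl <;> omega
  have hd1 : Disjoint R (Finset.Icc (i + 1) (i + m)) := by
    rw [Finset.disjoint_left]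
    intro x hx hxI
    exact ((hRmem x).1 hx).2 (Finset.mem_Icc.1 hxI)
  have hd2 : Disjoint R (Finset.Icc i (i + m)) := by
    rw [Finset.disjoint_left]
    intro x hx hxI
    have := hRn x hx
    rw [Finset.mem_Icc] at hxI this
    exact this ⟨hxI.1, by omega⟩
  have hv1 : umatchVal (pathEdges n) S = umatchVal (pathEdges n) R + m / 2 := by
    rw [hSdec, umatchVal_union _ _ _ hd1 hcross1,
      umatchVal_Icc n (i + 1) (i + m) (by omega) hin (by omega)]
    congr 1
    omega
  have hv2 : umatchVal (pathEdges n) (insert i S) =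
      umatchVal (pathEdges n) R + (m + 1) / 2 := by
    rw [hIdec, umatchVal_union _ _ _ hd2 hcross2,
      umatchVal_Icc n i (i + m) (by omega) hin (by omega)]
    congr 1
    omega
  rw [hv1, hv2, Nat.odd_iff]
  omega
end

section
/- Let P_n be the unweighted path graph on vertex set {1, …, n} and let v be the characteristic function of the matching game MG(P_n). Let i ∈ {1, …, n} and let S ⊆ {1, …, n} \ {i} be a coalition such that for some k1 ≥ 1 and k2 ≥ 1 the vertices i − k1, …, i − 1 and i + 1, …, i + k2 all belong to S, while i − k1 − 1 ∉ S and i + k2 + 1 ∉ S (vertices outside {1, …, n} being treated as absent). Then i is pivotal for S if and only if it is not the case that both k1 and k2 are even. -/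
attribute [local instance] Classical.propDecidable

open Finset

/-- the two-element finset of a Sym2 -/
def sym2Fin (e : Sym2 ℕ) : Finset ℕ :=
  Sym2.lift ⟨fun a b => ({a, b} : Finset ℕ), fun a b => Finset.pair_comm a b⟩ e

lemma mem_sym2Fin {x : ℕ} {e : Sym2 ℕ} : x ∈ sym2Fin e ↔ x ∈ e := by
  induction e using Sym2.ind with
  | _ a b => simp [sym2Fin, Sym2.mem_iff]

lemma card_sym2Fin {e : Sym2 ℕ} (h : ¬ e.IsDiag) : (sym2Fin e).card = 2 := by
  induction e using Sym2.ind with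
  | _ a b =>
    have : a ≠ b := by simpa using h
    simp [sym2Fin, Finset.card_pair this]

lemma umatch_set_nonempty {V : Type*} (E : Finset (Sym2 V)) (S : Finset V) :
    {k : ℕ | ∃ M : Finset (Sym2 V), IsMatchingOn E S M ∧ k = M.card}.Nonempty := by
  refine ⟨0, ∅, ?_, by simp⟩
  refine ⟨by simp, by simp, by simp, by simp⟩

lemma umatch_set_bdd {V : Type*} (E : Finset (Sym2 V)) (S : Finset V) :
    BddAbove {k : ℕ | ∃ M : Finset (Sym2 V), IsMatchingOn E S M ∧ k = M.card} := by
  refine ⟨E.card, fun k hk => ?_⟩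
  obtain ⟨M, hM, rfl⟩ := hk
  exact Finset.card_le_card hM.1

lemma le_umatchVal {V : Type*} {E : Finset (Sym2 V)} {S : Finset V} {M : Finset (Sym2 V)}
    (hM : IsMatchingOn E S M) : M.card ≤ umatchVal E S :=
  le_csSup (umatch_set_bdd E S) ⟨M, hM, rfl⟩

lemma exists_max_matching {V : Type*} (E : Finset (Sym2 V)) (S : Finset V) :
    ∃ M : Finset (Sym2 V), IsMatchingOn E S M ∧ umatchVal E S = M.card :=
  Nat.sSup_mem (umatch_set_nonempty E S) (umatch_set_bdd E S)

lemma matching_mono {V : Type*} {E : Finset (Sym2 V)} {S T : Finset V} {M : Finset (Sym2 V)}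
    (hM : IsMatchingOn E S M) (hST : S ⊆ T) : IsMatchingOn E T M :=
  ⟨hM.1, hM.2.1, fun e he x hx => hST (hM.2.2.1 e he x hx), hM.2.2.2⟩

lemma umatchVal_mono {V : Type*} (E : Finset (Sym2 V)) {S T : Finset V} (hST : S ⊆ T) :
    umatchVal E S ≤ umatchVal E T := by
  obtain ⟨M, hM, hcard⟩ := exists_max_matching E S
  rw [hcard]
  exact le_umatchVal (matching_mono hM hST)

/-- adding a vertex increases the matching number by at most one -/
lemma umatchVal_insert_le {V : Type*} [DecidableEq V] (E : Finset (Sym2 V)) (S : Finset V)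
    (i : V) : umatchVal E (insert i S) ≤ umatchVal E S + 1 := by
  obtain ⟨M, hM, hcard⟩ := exists_max_matching E (insert i S)
  rw [hcard]
  classical
  set M2 := M.filter (fun e => i ∉ e) with hM2def
  have hM2 : IsMatchingOn E S M2 := by
    refine ⟨fun e he => hM.1 (Finset.mem_filter.mp he).1,
      fun e he => hM.2.1 e (Finset.mem_filter.mp he).1, ?_,
      fun e he f hf => hM.2.2.2 e (Finset.mem_filter.mp he).1 f (Finset.mem_filter.mp hf).1⟩
    intro e he x hx
    have h1 := hM.2.2.1 e (Finset.mem_filter.mp he).1 x hx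
    have h2 : x ≠ i := fun h => (Finset.mem_filter.mp he).2 (h ▸ hx)
    rcases Finset.mem_insert.mp h1 with h | h
    · exact absurd h h2
    · exact h
  have hsplit : M.card ≤ M2.card + 1 := by
    have h1 : (M.filter (fun e => i ∈ e)).card ≤ 1 := by
      refine Finset.card_le_one.mpr (fun e he f hf => ?_)
      by_contra hne
      exact hM.2.2.2 e (Finset.mem_filter.mp he).1 f (Finset.mem_filter.mp hf).1 hne i
        (Finset.mem_filter.mp he).2 (Finset.mem_filter.mp hf).2
    have h4 := Finset.card_filter_add_card_filter_not (s := M) (p := fun e => i ∈ e)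
    have h3 : M.filter (fun a => ¬ i ∈ a) = M2 := rfl
    rw [h3] at h4
    omega
  have := le_umatchVal hM2
  omega

/-- Upper split: if no edge joins `T` to `U \ T`, then the matching number of `U` is at most
that of `U \ T` plus `|T|/2`. -/
lemma split_upper (E : Finset (Sym2 ℕ)) (U T : Finset ℕ)
    (hcl : ∀ e ∈ E, ∀ x ∈ e, ∀ y ∈ e, x ∈ T → y ∈ U → y ∈ T) :
    umatchVal E U ≤ umatchVal E (U \ T) + T.card / 2 := by
  obtain ⟨M, hM, hcard⟩ := exists_max_matching E U
  rw [hcard]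
  classical
  set M1 := M.filter (fun e => ∃ x ∈ e, x ∈ T) with hM1def
  set M2 := M.filter (fun e => ¬ ∃ x ∈ e, x ∈ T) with hM2def
  -- M2 is a matching on U \ T
  have hM2 : IsMatchingOn E (U \ T) M2 := by
    refine ⟨fun e he => hM.1 (Finset.mem_filter.mp he).1,
      fun e he => hM.2.1 e (Finset.mem_filter.mp he).1, ?_,
      fun e he f hf => hM.2.2.2 e (Finset.mem_filter.mp he).1 f (Finset.mem_filter.mp hf).1⟩
    intro e he x hx
    have h1 := hM.2.2.1 e (Finset.mem_filter.mp he).1 x hx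
    refine Finset.mem_sdiff.mpr ⟨h1, fun hxT => (Finset.mem_filter.mp he).2 ⟨x, hx, hxT⟩⟩
  -- all vertices of edges in M1 lie in T
  have hM1T : ∀ e ∈ M1, ∀ x ∈ e, x ∈ T := by
    intro e he x hx
    obtain ⟨y, hy, hyT⟩ := (Finset.mem_filter.mp he).2
    exact hcl e (hM.1 (Finset.mem_filter.mp he).1) y hy x hx hyT
      (hM.2.2.1 e (Finset.mem_filter.mp he).1 x hx)
  -- 2 * M1.card ≤ T.card
  have h2card : 2 * M1.card ≤ T.card := by
    have hdisj : ∀ e ∈ M1, ∀ f ∈ M1, e ≠ f → Disjoint (sym2Fin e) (sym2Fin f) := by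
      intro e he f hf hne
      rw [Finset.disjoint_left]
      intro x hx hxf
      exact hM.2.2.2 e (Finset.mem_filter.mp he).1 f (Finset.mem_filter.mp hf).1 hne x
        (mem_sym2Fin.mp hx) (mem_sym2Fin.mp hxf)
    have hb : (M1.biUnion sym2Fin).card = ∑ e ∈ M1, (sym2Fin e).card :=
      Finset.card_biUnion hdisj
    have hsum : ∑ e ∈ M1, (sym2Fin e).card = 2 * M1.card := by
      rw [Finset.sum_congr rfl (fun e he => card_sym2Fin (hM.2.1 e (Finset.mem_filter.mp he).1))]
      simp [mul_comm]
      rfl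
    have hsub : M1.biUnion sym2Fin ⊆ T := by
      intro x hx
      obtain ⟨e, he, hxe⟩ := Finset.mem_biUnion.mp hx
      exact hM1T e he x (mem_sym2Fin.mp hxe)
    have := Finset.card_le_card hsub
    omega
  have hsplit : M.card = M1.card + M2.card := by
    rw [hM1def, hM2def]
    exact (Finset.card_filter_add_card_filter_not (s := M)
      (p := fun e => ∃ x ∈ e, x ∈ T)).symm
  have h1 : M1.card ≤ T.card / 2 := by omega
  have h2 := le_umatchVal hM2
  omega

/-- Lower split: a matching on `T ⊆ U` plus a maximum matching of `U \ T` gives a matching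
of `U`. -/
lemma split_lower (E : Finset (Sym2 ℕ)) (U T : Finset ℕ) (M1 : Finset (Sym2 ℕ))
    (hT : T ⊆ U) (h1 : IsMatchingOn E T M1) :
    umatchVal E (U \ T) + M1.card ≤ umatchVal E U := by
  obtain ⟨M2, hM2, hcard⟩ := exists_max_matching E (U \ T)
  rw [hcard]
  have hvert1 : ∀ e ∈ M1, ∀ x ∈ e, x ∈ T := h1.2.2.1
  have hvert2 : ∀ e ∈ M2, ∀ x ∈ e, x ∉ T := fun e he x hx =>
    (Finset.mem_sdiff.mp (hM2.2.2.1 e he x hx)).2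
  have hdisjF : Disjoint M1 M2 := by
    rw [Finset.disjoint_left]
    intro e he1 he2
    induction e using Sym2.ind with
    | _ a b => exact hvert2 _ he2 a (Sym2.mem_mk_left a b) (hvert1 _ he1 a (Sym2.mem_mk_left a b))
  have hU : IsMatchingOn E U (M1 ∪ M2) := by
    refine ⟨Finset.union_subset h1.1 hM2.1, ?_, ?_, ?_⟩
    · intro e he
      rcases Finset.mem_union.mp he with h | h
      · exact h1.2.1 e h
      · exact hM2.2.1 e h
    · intro e he x hx
      rcases Finset.mem_union.mp he with h | h
      · exact hT (hvert1 e h x hx)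
      · exact (Finset.mem_sdiff.mp (hM2.2.2.1 e h x hx)).1
    · intro e he f hf hne x hx
      rcases Finset.mem_union.mp he with h | h <;> rcases Finset.mem_union.mp hf with h' | h'
      · exact h1.2.2.2 e h f h' hne x hx
      · exact fun hxf => hvert2 f h' x hxf (hvert1 e h x hx)
      · exact fun hxf => hvert2 e h x hx (hvert1 f h' x hxf)
      · exact hM2.2.2.2 e h f h' hne x hx
  have := le_umatchVal hU
  rw [Finset.card_union_of_disjoint hdisjF] at this
  omega

lemma mem_pathEdges {n : ℕ} {e : Sym2 ℕ} :
    e ∈ pathEdges n ↔ ∃ j, 1 ≤ j ∧ j + 1 ≤ n ∧ e = s(j, j + 1) := by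
  simp only [pathEdges, Finset.mem_image, Finset.mem_Icc]
  constructor
  · rintro ⟨j, ⟨hj1, hj2⟩, rfl⟩
    exact ⟨j, hj1, by omega, rfl⟩
  · rintro ⟨j, hj1, hj2, rfl⟩
    exact ⟨j, ⟨hj1, by omega⟩, rfl⟩

/-- Closure: no edge of the path joins `Icc l r` to the rest of `U` if `l-1 ∉ U` and
`r+1 ∉ U`. -/
lemma icc_closed {n l r : ℕ} {U : Finset ℕ} (hl1 : 1 ≤ l) (hl : l - 1 ∉ U) (hr : r + 1 ∉ U) :
    ∀ e ∈ pathEdges n, ∀ x ∈ e, ∀ y ∈ e, x ∈ Finset.Icc l r → y ∈ U → y ∈ Finset.Icc l r := by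
  intro e he x hx y hy hxT hyU
  obtain ⟨j, hj1, hj2, rfl⟩ := mem_pathEdges.mp he
  rw [Sym2.mem_iff] at hx hy
  rw [Finset.mem_Icc] at hxT ⊢
  have hyl : y ≠ l - 1 := fun h => hl (h ▸ hyU)
  have hyr : y ≠ r + 1 := fun h => hr (h ▸ hyU)
  omega

/-- The perfect matching of the segment `a, a+1, …, a+2m-1`. -/
def segMatch (a m : ℕ) : Finset (Sym2 ℕ) :=
  (Finset.range m).image (fun j => s(a + 2 * j, a + 2 * j + 1))

lemma segMatch_card (a m : ℕ) : (segMatch a m).card = m := by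
  rw [segMatch, Finset.card_image_of_injective _ ?_, Finset.card_range]
  intro j j' h
  rw [Sym2.eq_iff] at h
  omega

lemma segMatch_isMatching {n a m : ℕ} {T : Finset ℕ} (ha : 1 ≤ a) (hn : a + 2 * m ≤ n + 1)
    (hT : ∀ x, a ≤ x → x < a + 2 * m → x ∈ T) :
    IsMatchingOn (pathEdges n) T (segMatch a m) := by
  have hmem : ∀ e ∈ segMatch a m, ∃ j < m, e = s(a + 2 * j, a + 2 * j + 1) := by
    intro e he
    obtain ⟨j, hj, rfl⟩ := Finset.mem_image.mp he
    exact ⟨j, Finset.mem_range.mp hj, rfl⟩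
  refine ⟨?_, ?_, ?_, ?_⟩
  · intro e he
    obtain ⟨j, hj, rfl⟩ := hmem e he
    exact mem_pathEdges.mpr ⟨a + 2 * j, by omega, by omega, rfl⟩
  · intro e he
    obtain ⟨j, hj, rfl⟩ := hmem e he
    simp [Sym2.isDiag_iff_proj_eq]
  · intro e he x hx
    obtain ⟨j, hj, rfl⟩ := hmem e he
    rw [Sym2.mem_iff] at hx
    exact hT x (by omega) (by omega)
  · intro e he f hf hne x hx hxf
    obtain ⟨j, hj, rfl⟩ := hmem e he
    obtain ⟨j', hj', rfl⟩ := hmem f hf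
    rw [Sym2.mem_iff] at hx hxf
    have : j ≠ j' := fun h => hne (by rw [h])
    omega

/-- In the matching game on the path `P_n`, if the coalition `S` contains the
segments `i-k1, …, i-1` and `i+1, …, i+k2` (`k1, k2 ≥ 1`) but neither `i-k1-1` nor `i+k2+1`,
then `i` is pivotal for `S` iff `k1` and `k2` are not both even. -/
theorem pivotal_path_connect_segments (n : ℕ) (i : ℕ) (hi : i ∈ Finset.Icc 1 n)
    (S : Finset ℕ) (hS : S ⊆ Finset.Icc 1 n) (hiS : i ∉ S)
    (k1 k2 : ℕ) (hk1 : 1 ≤ k1) (hk2 : 1 ≤ k2)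
    (hsegL : ∀ t, 1 ≤ t → t ≤ k1 → i - t ∈ S) (hendL : i - k1 - 1 ∉ S)
    (hsegR : ∀ t, 1 ≤ t → t ≤ k2 → i + t ∈ S) (hendR : i + k2 + 1 ∉ S) :
    (umatchVal (pathEdges n) (insert i S) = umatchVal (pathEdges n) S + 1) ↔
      ¬ (Even k1 ∧ Even k2) := by
  rw [Finset.mem_Icc] at hi
  have hk1i : k1 + 1 ≤ i := by
    have := hS (hsegL k1 hk1 le_rfl)
    rw [Finset.mem_Icc] at this
    omega
  have hk2n : i + k2 ≤ n := by
    have := hS (hsegR k2 hk2 le_rfl)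
    rw [Finset.mem_Icc] at this
    exact this.2
  have hLsub : Finset.Icc (i - k1) (i - 1) ⊆ S := by
    intro x hx
    rw [Finset.mem_Icc] at hx
    have hx' : i - (i - x) = x := by omega
    exact hx' ▸ hsegL (i - x) (by omega) (by omega)
  have hRsub : Finset.Icc (i + 1) (i + k2) ⊆ S := by
    intro x hx
    rw [Finset.mem_Icc] at hx
    have hx' : i + (x - i) = x := by omega
    exact hx' ▸ hsegR (x - i) (by omega) (by omega)
  have hmono : umatchVal (pathEdges n) S ≤ umatchVal (pathEdges n) (insert i S) :=
    umatchVal_mono _ (Finset.subset_insert i S)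
  by_cases hpar : Even k1 ∧ Even k2
  · -- both even : value does not increase
    obtain ⟨⟨a1, ha1⟩, ⟨b1, hb1⟩⟩ := hpar
    have hl : (i - k1) - 1 ∉ insert i S := by
      simp only [Finset.mem_insert, not_or]
      exact ⟨by omega, hendL⟩
    have hr : (i + k2) + 1 ∉ insert i S := by
      simp only [Finset.mem_insert, not_or]
      exact ⟨by omega, hendR⟩
    have hupper := split_upper (pathEdges n) (insert i S) (Finset.Icc (i - k1) (i + k2))
      (icc_closed (by omega) hl hr)
    have hTins : insert i S \ Finset.Icc (i - k1) (i + k2) = S \ Finset.Icc (i - k1) (i + k2) := by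
      ext x
      simp only [Finset.mem_sdiff, Finset.mem_insert, Finset.mem_Icc]
      constructor
      · rintro ⟨h | h, h2⟩
        · exact absurd h (by omega)
        · exact ⟨h, h2⟩
      · rintro ⟨h, h2⟩
        exact ⟨Or.inr h, h2⟩
    have hcardT : (Finset.Icc (i - k1) (i + k2)).card = k1 + k2 + 1 := by
      rw [Nat.card_Icc]; omega
    rw [hTins, hcardT] at hupper
    -- lower
    have hlow1 := split_lower (pathEdges n) S (Finset.Icc (i - k1) (i - 1)) (segMatch (i - k1) a1)
      hLsub (segMatch_isMatching (by omega) (by omega)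
        (fun x h1 h2 => Finset.mem_Icc.mpr ⟨h1, by omega⟩))
    rw [segMatch_card] at hlow1
    have hRsub' : Finset.Icc (i + 1) (i + k2) ⊆ S \ Finset.Icc (i - k1) (i - 1) := by
      intro x hx
      have hx' := Finset.mem_Icc.mp hx
      refine Finset.mem_sdiff.mpr ⟨hRsub hx, ?_⟩
      rw [Finset.mem_Icc]
      omega
    have hlow2 := split_lower (pathEdges n) (S \ Finset.Icc (i - k1) (i - 1))
      (Finset.Icc (i + 1) (i + k2)) (segMatch (i + 1) b1) hRsub'
      (segMatch_isMatching (by omega) (by omega)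
        (fun x h1 h2 => Finset.mem_Icc.mpr ⟨h1, by omega⟩))
    rw [segMatch_card] at hlow2
    have hset : (S \ Finset.Icc (i - k1) (i - 1)) \ Finset.Icc (i + 1) (i + k2)
        = S \ Finset.Icc (i - k1) (i + k2) := by
      ext x
      simp only [Finset.mem_sdiff, Finset.mem_Icc]
      constructor
      · rintro ⟨⟨hxS, h1⟩, h2⟩
        have hxi : x ≠ i := fun h => hiS (h ▸ hxS)
        exact ⟨hxS, by omega⟩
      · rintro ⟨hxS, h⟩
        have hxi : x ≠ i := fun h' => hiS (h' ▸ hxS)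
        exact ⟨⟨hxS, by omega⟩, by omega⟩
    rw [hset] at hlow2
    refine iff_of_false (by omega) (fun h => h ⟨⟨a1, ha1⟩, ⟨b1, hb1⟩⟩)
  · -- not both even : value increases by exactly one
    refine iff_of_true ?_ hpar
    have hub := umatchVal_insert_le (pathEdges n) S i
    have hlb : umatchVal (pathEdges n) S + 1 ≤ umatchVal (pathEdges n) (insert i S) := by
      rcases Nat.even_or_odd k1 with he1 | ho1
      · -- k1 even hence k2 odd
        have ho2 : Odd k2 := by
          rcases Nat.even_or_odd k2 with he2 | ho2
          · exact absurd ⟨he1, he2⟩ hpar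
          · exact ho2
        obtain ⟨b1, hb1⟩ := ho2
        -- lower on insert i S with segment i..i+k2
        have hTsub : Finset.Icc i (i + k2) ⊆ insert i S := by
          intro x hx
          have hx' := Finset.mem_Icc.mp hx
          rcases eq_or_ne x i with h | h
          · exact h ▸ Finset.mem_insert_self i S
          · exact Finset.mem_insert_of_mem (hRsub (Finset.mem_Icc.mpr (by omega)))
        have hlow := split_lower (pathEdges n) (insert i S) (Finset.Icc i (i + k2))
          (segMatch i (b1 + 1)) hTsub
          (segMatch_isMatching (by omega) (by omega)
            (fun x h1 h2 => Finset.mem_Icc.mpr ⟨h1, by omega⟩))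
        rw [segMatch_card] at hlow
        have hset : insert i S \ Finset.Icc i (i + k2) = S \ Finset.Icc (i + 1) (i + k2) := by
          ext x
          simp only [Finset.mem_sdiff, Finset.mem_insert, Finset.mem_Icc]
          constructor
          · rintro ⟨h | h, h2⟩
            · exact absurd h (by omega)
            · exact ⟨h, by omega⟩
          · rintro ⟨hxS, h⟩
            have hxi : x ≠ i := fun h' => hiS (h' ▸ hxS)
            exact ⟨Or.inr hxS, by omega⟩
        rw [hset] at hlow
        -- upper on S with segment i+1..i+k2
        have hl : (i + 1) - 1 ∉ S := by simpa using hiS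
        have hupper := split_upper (pathEdges n) S (Finset.Icc (i + 1) (i + k2))
          (icc_closed (by omega) hl hendR)
        have hcardT : (Finset.Icc (i + 1) (i + k2)).card = k2 := by
          rw [Nat.card_Icc]; omega
        rw [hcardT] at hupper
        omega
      · -- k1 odd
        obtain ⟨a1, ha1⟩ := ho1
        have hTsub : Finset.Icc (i - k1) i ⊆ insert i S := by
          intro x hx
          have hx' := Finset.mem_Icc.mp hx
          rcases eq_or_ne x i with h | h
          · exact h ▸ Finset.mem_insert_self i S
          · exact Finset.mem_insert_of_mem (hLsub (Finset.mem_Icc.mpr (by omega)))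
        have hlow := split_lower (pathEdges n) (insert i S) (Finset.Icc (i - k1) i)
          (segMatch (i - k1) (a1 + 1)) hTsub
          (segMatch_isMatching (by omega) (by omega)
            (fun x h1 h2 => Finset.mem_Icc.mpr ⟨h1, by omega⟩))
        rw [segMatch_card] at hlow
        have hset : insert i S \ Finset.Icc (i - k1) i = S \ Finset.Icc (i - k1) (i - 1) := by
          ext x
          simp only [Finset.mem_sdiff, Finset.mem_insert, Finset.mem_Icc]
          constructor
          · rintro ⟨h | h, h2⟩
            · exact absurd h (by omega)
            · exact ⟨h, by omega⟩
          · rintro ⟨hxS, h⟩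
            have hxi : x ≠ i := fun h' => hiS (h' ▸ hxS)
            exact ⟨Or.inr hxS, by omega⟩
        rw [hset] at hlow
        have hr : (i - 1) + 1 ∉ S := by
          have : (i - 1) + 1 = i := by omega
          rw [this]; exact hiS
        have hupper := split_upper (pathEdges n) S (Finset.Icc (i - k1) (i - 1))
          (icc_closed (by omega) hendL hr)
        have hcardT : (Finset.Icc (i - k1) (i - 1)).card = k1 := by
          rw [Nat.card_Icc]; omega
        rw [hcardT] at hupper
        omega
    omega
end

section
/- For every n ≥ 0, the (n+1) × (n+1) matrix B with rows and columns indexed by 0, …, n and entries B_{ij} = (i + j)! has determinant equal to the product Π_{i=0}^{n} (i!)²; in particular, B is nonsingular. -/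
open Finset

lemma vandermonde_sum (i j n : ℕ) (hj : j ≤ n) :
    (i + j).choose j = ∑ k ∈ Finset.range (n + 1), i.choose k * j.choose k := by
  rw [Nat.add_choose_eq i j j, Finset.Nat.sum_antidiagonal_eq_sum_range_succ
    (f := fun a b => i.choose a * j.choose b)]
  rw [← Finset.sum_range_add_sum_Ico _ (Nat.succ_le_succ hj)]
  have h1 : ∑ k ∈ Finset.Ico (j + 1) (n + 1), i.choose k * j.choose k = 0 := by
    apply Finset.sum_eq_zero
    intro k hk
    simp only [Finset.mem_Ico] at hk
    rw [Nat.choose_eq_zero_of_lt hk.1, mul_zero]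
  rw [h1, add_zero]
  apply Finset.sum_congr rfl
  intro k hk
  simp only [Finset.mem_range] at hk
  rw [Nat.choose_symm (by omega : k ≤ j)]

lemma fact_sum_eq (i j n : ℕ) (hj : j ≤ n) :
    (i + j).factorial =
      ∑ k ∈ Finset.range (n + 1),
        (i.factorial * i.choose k) * (j.factorial * j.choose k) := by
  have h2 : ∑ k ∈ Finset.range (n + 1),
      (i.factorial * i.choose k) * (j.factorial * j.choose k)
      = i.factorial * j.factorial * ∑ k ∈ Finset.range (n + 1), i.choose k * j.choose k := by
    rw [Finset.mul_sum]
    exact Finset.sum_congr rfl fun k _ => by ring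
  rw [h2, ← vandermonde_sum i j n hj]
  calc (i + j).factorial = (i + j).choose j * i.factorial * j.factorial :=
        (Nat.add_choose_mul_factorial_mul_factorial i j).symm
    _ = i.factorial * j.factorial * (i + j).choose j := by ring

/-- The `(n+1) × (n+1)` matrix `B` with `B i j = (i + j)!` has determinant
`Π_{i=0}^{n} (i!)²`; in particular it is nonsingular. -/
theorem det_factorial_matrix (n : ℕ) (B : Matrix (Fin (n + 1)) (Fin (n + 1)) ℚ)
    (hB : ∀ i j : Fin (n + 1), B i j = (Nat.factorial (i.val + j.val) : ℚ)) :
    B.det = ∏ i ∈ Finset.range (n + 1), (Nat.factorial i : ℚ) ^ 2 ∧ B.det ≠ 0 := by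
  set M : Matrix (Fin (n + 1)) (Fin (n + 1)) ℚ :=
    fun i k => ((i.val.factorial * i.val.choose k.val : ℕ) : ℚ) with hM
  have hBM : B = M * M.transpose := by
    ext i j
    rw [hB]
    simp only [Matrix.mul_apply, Matrix.transpose_apply]
    simp only [hM]
    rw [Fin.sum_univ_eq_sum_range (fun k =>
      ((i.val.factorial * i.val.choose k : ℕ) : ℚ) * ((j.val.factorial * j.val.choose k : ℕ) : ℚ))]
    rw [fact_sum_eq i.val j.val n (Nat.lt_succ_iff.mp j.isLt)]
    push_cast
    ring
  have hMtri : M.BlockTriangular OrderDual.toDual := by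
    intro i j hij
    simp only [OrderDual.toDual_lt_toDual] at hij
    simp [hM, Nat.choose_eq_zero_of_lt (show i.val < j.val from hij)]
  have hdetM : M.det = ∏ i ∈ Finset.range (n + 1), (Nat.factorial i : ℚ) := by
    rw [Matrix.det_of_lowerTriangular M hMtri,
      ← Fin.prod_univ_eq_prod_range (fun i => (Nat.factorial i : ℚ))]
    apply Finset.prod_congr rfl
    intro i _
    simp [hM]
  have hdet : B.det = ∏ i ∈ Finset.range (n + 1), (Nat.factorial i : ℚ) ^ 2 := by
    rw [hBM, Matrix.det_mul, Matrix.det_transpose, hdetM, ← Finset.prod_mul_distrib]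
    apply Finset.prod_congr rfl
    intro i _
    ring
  refine ⟨hdet, ?_⟩
  rw [hdet]
  apply Finset.prod_ne_zero_iff.mpr
  intro i _
  positivity
end

section
/- Let G = (N, E, w) be a weighted graph with nonnegative edge weights and n = |N| ≥ 2 vertices, and let v be the characteristic function of the matching game MG(G). Let i ∈ N be a vertex with at least one incident edge, and let w_i^max denote the maximum weight among the edges incident to i. Then the raw Shapley value of i satisfies κ_i(N, v) ≥ w_i^max · (n − 2)!. -/
attribute [local instance] Classical.propDecidable

/-- Maximum weight among the edges incident to `i` (and `0` if `i` has no incident edge). -/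
noncomputable def maxIncW {V : Type*} (E : Finset (Sym2 V)) (w : Sym2 V → ℝ) (i : V) : ℝ :=
  (E.filter (fun e => i ∈ e)).fold max 0 w

lemma isMatchingOn_empty {V : Type*} (E : Finset (Sym2 V)) (S : Finset V) :
    IsMatchingOn E S ∅ := by
  refine ⟨Finset.empty_subset _, ?_, ?_, ?_⟩ <;> simp

lemma matchSet_nonempty {V : Type*} (E : Finset (Sym2 V)) (w : Sym2 V → ℝ) (S : Finset V) :
    {x : ℝ | ∃ M : Finset (Sym2 V), IsMatchingOn E S M ∧ x = ∑ e ∈ M, w e}.Nonempty :=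
  ⟨0, ∅, isMatchingOn_empty E S, by simp⟩

lemma matchSet_bdd {V : Type*} (E : Finset (Sym2 V)) (w : Sym2 V → ℝ)
    (hw : ∀ e ∈ E, 0 ≤ w e) (S : Finset V) :
    BddAbove {x : ℝ | ∃ M : Finset (Sym2 V), IsMatchingOn E S M ∧ x = ∑ e ∈ M, w e} := by
  refine ⟨∑ e ∈ E, w e, ?_⟩
  rintro x ⟨M, hM, rfl⟩
  exact Finset.sum_le_sum_of_subset_of_nonneg hM.1 (fun e he _ => hw e he)

lemma matchVal_nonneg {V : Type*} (E : Finset (Sym2 V)) (w : Sym2 V → ℝ)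
    (hw : ∀ e ∈ E, 0 ≤ w e) (S : Finset V) : 0 ≤ matchVal E w S :=
  le_csSup (matchSet_bdd E w hw S) ⟨∅, isMatchingOn_empty E S, by simp⟩

lemma matchVal_mono {V : Type*} (E : Finset (Sym2 V)) (w : Sym2 V → ℝ)
    (hw : ∀ e ∈ E, 0 ≤ w e) {S T : Finset V} (hST : S ⊆ T) :
    matchVal E w S ≤ matchVal E w T := by
  apply csSup_le_csSup (matchSet_bdd E w hw T) (matchSet_nonempty E w S)
  rintro x ⟨M, ⟨h1, h2, h3, h4⟩, rfl⟩
  exact ⟨M, ⟨h1, h2, fun e he x hx => hST (h3 e he x hx), h4⟩, rfl⟩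

lemma matchVal_singleton {V : Type*} (E : Finset (Sym2 V)) (w : Sym2 V → ℝ)
    (j : V) : matchVal E w {j} ≤ 0 := by
  apply csSup_le (matchSet_nonempty E w {j})
  rintro x ⟨M, ⟨h1, h2, h3, h4⟩, rfl⟩
  have hM : M = ∅ := by
    by_contra h
    obtain ⟨e, he⟩ := Finset.nonempty_iff_ne_empty.mpr h
    induction e using Sym2.ind with
    | _ a b =>
      have ha : a ∈ ({j} : Finset V) := h3 _ he a (by simp)
      have hb : b ∈ ({j} : Finset V) := h3 _ he b (by simp [Sym2.mem_iff])
      simp only [Finset.mem_singleton] at ha hb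
      exact h2 _ he (by simp [ha, hb, Sym2.mk_isDiag_iff])
  simp [hM]

/-- In a weighted matching game on `n ≥ 2` vertices with nonnegative weights,
the raw Shapley value of a vertex `i` with at least one incident edge is at least
`w_i^max · (n - 2)!`. -/
theorem rawShapley_lower_bound {V : Type*} [Fintype V] [DecidableEq V]
    (E : Finset (Sym2 V)) (w : Sym2 V → ℝ)
    (hloop : ∀ e ∈ E, ¬ e.IsDiag) (hw : ∀ e ∈ E, 0 ≤ w e)
    (hn : 2 ≤ Fintype.card V)
    (i : V) (hinc : ∃ e ∈ E, i ∈ e) :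
    maxIncW E w i * (Nat.factorial (Fintype.card V - 2) : ℝ) ≤
      rawShapley Finset.univ (matchVal E w) i := by
  classical
  set n := Fintype.card V with hncard
  -- pick a maximum-weight incident edge e*
  obtain ⟨e0, he0E, he0i⟩ := hinc
  have hfilt : (E.filter (fun e => i ∈ e)).Nonempty := ⟨e0, Finset.mem_filter.mpr ⟨he0E, he0i⟩⟩
  obtain ⟨e, heF, hemax⟩ := Finset.exists_max_image _ w hfilt
  have heE : e ∈ E := (Finset.mem_filter.mp heF).1
  have hei : i ∈ e := (Finset.mem_filter.mp heF).2
  have hmaxle : maxIncW E w i ≤ w e := by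
    rw [maxIncW, Finset.fold_max_le]
    refine ⟨hw e heE, fun x hx => hemax x ?_⟩
    simp only [Finset.mem_filter] at hx ⊢
    exact hx
  -- the other endpoint j
  set j := Sym2.Mem.other hei with hj
  have hej : e = s(i, j) := (Sym2.other_spec hei).symm
  have hij : j ≠ i := by
    intro h
    exact hloop e heE (by rw [hej, h]; simp [Sym2.mk_isDiag_iff])
  -- matchVal {i, j} ≥ w e
  have hv2 : w e ≤ matchVal E w (insert i {j}) := by
    apply le_csSup (matchSet_bdd E w hw _)
    refine ⟨{e}, ⟨Finset.singleton_subset_iff.mpr heE, ?_, ?_, ?_⟩, by simp⟩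
    · intro f hf; rw [Finset.mem_singleton] at hf; rw [hf]; exact hloop e heE
    · intro f hf x hx; rw [Finset.mem_singleton] at hf
      rw [hf, hej, Sym2.mem_iff] at hx
      rcases hx with rfl | rfl <;> simp
    · intro f hf g hg hfg
      rw [Finset.mem_singleton] at hf hg; exact absurd (hf.trans hg.symm) hfg
  -- set up the sum
  rw [rawShapley]
  have hjmem : ({j} : Finset V) ∈ ((Finset.univ : Finset V).erase i).powerset := by
    simp [Finset.singleton_subset_iff, Finset.mem_erase, hij]
  have hterm : ∀ S ∈ ((Finset.univ : Finset V).erase i).powerset,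
      0 ≤ (Nat.factorial S.card : ℝ) * (Nat.factorial ((Finset.univ : Finset V).card - S.card - 1) : ℝ) *
        (matchVal E w (insert i S) - matchVal E w S) := by
    intro S _
    apply mul_nonneg (mul_nonneg (by positivity) (by positivity))
    rw [sub_nonneg]
    exact matchVal_mono E w hw (Finset.subset_insert i S)
  refine le_trans ?_ (Finset.single_le_sum hterm hjmem)
  have hcard : (Finset.univ : Finset V).card = n := Finset.card_univ
  rw [hcard]
  have hc1 : ({j} : Finset V).card = 1 := Finset.card_singleton j
  rw [hc1]
  have : n - 1 - 1 = n - 2 := by omega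
  rw [this, Nat.factorial_one]
  have hs : matchVal E w {j} ≤ 0 := matchVal_singleton E w j
  have : maxIncW E w i ≤ matchVal E w (insert i {j}) - matchVal E w {j} := by
    have := matchVal_nonneg E w hw {j}
    linarith
  calc maxIncW E w i * (Nat.factorial (n - 2) : ℝ)
      ≤ (matchVal E w (insert i {j}) - matchVal E w {j}) * (Nat.factorial (n - 2) : ℝ) := by
        apply mul_le_mul_of_nonneg_right this (by positivity)
    _ = (1 : ℝ) * (Nat.factorial (n - 2) : ℝ) *
        (matchVal E w (insert i {j}) - matchVal E w {j}) := by ring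
    _ ≤ ((1 : ℕ) : ℝ) * (Nat.factorial (n - 2) : ℝ) *
        (matchVal E w (insert i {j}) - matchVal E w {j}) := by norm_num
end

section
/- Let G = (N, E, w) be a weighted graph with nonnegative edge weights and n = |N| ≥ 2 vertices, let v be the characteristic function of the matching game MG(G), and let i ∈ N be a vertex with at least one incident edge of positive weight, so that κ_i = κ_i(N, v) > 0. Fix ε > 0, let m = ⌈4 n² (n−1)² / ε²⌉, let σ_1, …, σ_m be independent permutations of N each chosen uniformly at random, and let κ̄_i = (1/m) · Σ_{j=1}^{m} n! · (v(p(i, σ_j) ∪ {i}) − v(p(i, σ_j))). Then Pr[|κ̄_i − κ_i| ≥ ε · κ_i] ≤ 1/4. -/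
attribute [local instance] Classical.propDecidable

/-- The set `p(i, σ)` of players occurring before `i` in the permutation `σ`. -/
def before {n : ℕ} (i : Fin n) (σ : Equiv.Perm (Fin n)) : Finset (Fin n) :=
  Finset.univ.filter (fun j => σ.symm j < σ.symm i)

namespace MVal

variable {V : Type*} [DecidableEq V] (E : Finset (Sym2 V)) (w : Sym2 V → ℝ) (S : Finset V)

noncomputable def vals : Finset ℝ :=
  (E.powerset.filter (fun M => IsMatchingOn E S M)).image (fun M => ∑ e ∈ M, w e)

lemma empty_matching : IsMatchingOn E S ∅ := by
  refine ⟨Finset.empty_subset _, ?_, ?_, ?_⟩ <;> simp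

lemma vals_nonempty : (vals E w S).Nonempty := by
  refine ⟨0, ?_⟩
  simp only [vals, Finset.mem_image]
  exact ⟨∅, by simp [empty_matching], by simp⟩

lemma setOf_eq : {x : ℝ | ∃ M : Finset (Sym2 V), IsMatchingOn E S M ∧ x = ∑ e ∈ M, w e}
    = ↑(vals E w S) := by
  ext x
  simp only [Set.mem_setOf_eq, vals, Finset.coe_image, Set.mem_image, Finset.mem_coe,
    Finset.mem_filter, Finset.mem_powerset]
  constructor
  · rintro ⟨M, hM, rfl⟩; exact ⟨M, ⟨hM.1, hM⟩, rfl⟩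
  · rintro ⟨M, ⟨_, hM⟩, rfl⟩; exact ⟨M, hM, rfl⟩

lemma matchVal_eq_max' : matchVal E w S = (vals E w S).max' (vals_nonempty E w S) := by
  rw [matchVal, setOf_eq, (vals_nonempty E w S).csSup_eq_max']

lemma le_matchVal {M : Finset (Sym2 V)} (hM : IsMatchingOn E S M) :
    ∑ e ∈ M, w e ≤ matchVal E w S := by
  rw [matchVal_eq_max']
  apply Finset.le_max'
  simp only [vals, Finset.mem_image]
  exact ⟨M, by simp [Finset.mem_filter, hM.1, hM], rfl⟩

lemma exists_matchVal : ∃ M : Finset (Sym2 V), IsMatchingOn E S M ∧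
    matchVal E w S = ∑ e ∈ M, w e := by
  have := (vals E w S).max'_mem (vals_nonempty E w S)
  rw [← matchVal_eq_max'] at this
  simp only [vals, Finset.mem_image, Finset.mem_filter, Finset.mem_powerset] at this
  obtain ⟨M, ⟨_, hM⟩, h⟩ := this
  exact ⟨M, hM, h.symm⟩

lemma matchVal_nonneg : 0 ≤ matchVal E w S := by
  simpa using le_matchVal E w S (empty_matching E S)

lemma matchVal_mono (i : V) : matchVal E w S ≤ matchVal E w (insert i S) := by
  obtain ⟨M, hM, h⟩ := exists_matchVal E w S
  rw [h]
  exact le_matchVal E w _ ⟨hM.1, hM.2.1, fun e he x hx =>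
    Finset.mem_insert_of_mem (hM.2.2.1 e he x hx), hM.2.2.2⟩

lemma matchVal_singleton (hloop : ∀ e ∈ E, ¬ e.IsDiag) (j : V) :
    matchVal E w {j} = 0 := by
  obtain ⟨M, hM, h⟩ := exists_matchVal E w {j}
  have : M = ∅ := by
    by_contra hne
    obtain ⟨e, he⟩ := Finset.nonempty_iff_ne_empty.2 hne
    induction e with
    | h x y =>
      have hx := hM.2.2.1 _ he x (by simp [Sym2.mem_iff])
      have hy := hM.2.2.1 _ he y (by simp [Sym2.mem_iff])
      simp only [Finset.mem_singleton] at hx hy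
      exact hM.2.1 _ he (by simp [Sym2.isDiag_iff_proj_eq, hx, hy])
  rw [h, this, Finset.sum_empty]

/-- marginal contribution bounded above by max incident edge weight -/
lemma marginal_le (hw : ∀ e ∈ E, 0 ≤ w e) (i : V) (W : ℝ)
    (hW : ∀ e ∈ E, i ∈ e → w e ≤ W) (hW0 : 0 ≤ W) :
    matchVal E w (insert i S) - matchVal E w S ≤ W := by
  obtain ⟨M, hM, h⟩ := exists_matchVal E w (insert i S)
  by_cases hc : ∃ e ∈ M, i ∈ e
  · obtain ⟨e₀, he₀, hie₀⟩ := hc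
    have hM' : IsMatchingOn E S (M.erase e₀) := by
      refine ⟨(Finset.erase_subset _ _).trans hM.1, fun e he => hM.2.1 e (Finset.mem_of_mem_erase he),
        ?_, fun e he f hf => hM.2.2.2 e (Finset.mem_of_mem_erase he) f (Finset.mem_of_mem_erase hf)⟩
      intro e he x hx
      have hxi : x ≠ i := by
        intro hxe
        exact hM.2.2.2 e (Finset.mem_of_mem_erase he) e₀ he₀ (Finset.ne_of_mem_erase he) x hx
          (hxe ▸ hie₀)
      have := hM.2.2.1 e (Finset.mem_of_mem_erase he) x hx
      rcases Finset.mem_insert.1 this with h' | h'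
      · exact absurd h' hxi
      · exact h'
    have hle : ∑ e ∈ M.erase e₀, w e ≤ matchVal E w S := le_matchVal E w S hM'
    have hsplit : ∑ e ∈ M, w e = w e₀ + ∑ e ∈ M.erase e₀, w e :=
      (Finset.add_sum_erase _ _ he₀).symm
    have hwe₀ : w e₀ ≤ W := hW e₀ (hM.1 he₀) hie₀
    rw [h, hsplit]
    linarith
  · push_neg at hc
    have hM' : IsMatchingOn E S M := by
      refine ⟨hM.1, hM.2.1, ?_, hM.2.2.2⟩
      intro e he x hx
      rcases Finset.mem_insert.1 (hM.2.2.1 e he x hx) with h' | h'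
      · exact absurd (h' ▸ hx) (hc e he)
      · exact h'
    have := le_matchVal E w S hM'
    rw [h]; linarith

end MVal

namespace Cnt

open Finset Equiv Nat

lemma before_subset {n : ℕ} (i : Fin n) (σ : Equiv.Perm (Fin n)) :
    before i σ ⊆ Finset.univ.erase i := by
  intro j hj
  simp only [before, mem_filter] at hj
  refine Finset.mem_erase.2 ⟨?_, mem_univ _⟩
  rintro rfl
  exact lt_irrefl _ hj.2

lemma card_before {n : ℕ} (i : Fin n) (σ : Equiv.Perm (Fin n)) :
    (before i σ).card = (σ.symm i : ℕ) := by
  rw [show (before i σ).card = (Finset.Iio (σ.symm i)).card from ?_, Fin.card_Iio]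
  apply Finset.card_nbij (fun j => σ.symm j)
  · intro j hj
    simp only [before, Finset.coe_filter, Set.mem_setOf_eq, mem_univ, true_and] at hj
    simpa using hj
  · intro a _ b _ hab
    exact σ.symm.injective hab
  · intro x hx
    simp only [Finset.coe_Iio, Set.mem_Iio] at hx
    refine ⟨σ x, ?_, by simp⟩
    simp only [before, Finset.coe_filter, Set.mem_setOf_eq, mem_univ, true_and]
    simpa using hx

/-- number of permutations whose `before i` set is exactly `S` -/
lemma card_fiber {n : ℕ} (i : Fin n) (S : Finset (Fin n)) (hS : S ⊆ Finset.univ.erase i) :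
    (Finset.univ.filter (fun σ : Equiv.Perm (Fin n) => before i σ = S)).card
      = (S.card)! * (n - 1 - S.card)! := by
  have hi : i ∉ S := fun h => (Finset.mem_erase.1 (hS h)).1 rfl
  set k := S.card with hkdef
  have hkn : k < n := by
    have := Finset.card_le_card hS
    have hcu : (Finset.univ.erase i).card = n - 1 := by
      rw [Finset.card_erase_of_mem (mem_univ i)]; simp
    have hn0 : 0 < n := i.pos
    omega
  -- the classifying functions
  set f : Fin n → Fin 3 := fun a => if a ∈ S then 0 else if a = i then 1 else 2 with hf
  set g : Fin n → Fin 3 := fun x => if (x : ℕ) < k then 0 else if (x : ℕ) = k then 1 else 2 with hg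
  have hg0 : ∀ x : Fin n, g x = 0 ↔ (x : ℕ) < k := by
    intro x; simp only [hg]
    split_ifs with h1 h2 <;> simp_all <;> omega
  have hg1 : ∀ x : Fin n, g x = 1 ↔ (x : ℕ) = k := by
    intro x; simp only [hg]
    split_ifs with h1 h2 <;> simp_all <;> omega
  have hf0 : ∀ a : Fin n, f a = 0 ↔ a ∈ S := by
    intro a; simp only [hf]
    split_ifs with h1 h2 <;> simp_all
  have hf1 : ∀ a : Fin n, f a = 1 ↔ a = i := by
    intro a; simp only [hf]
    split_ifs with h1 h2 <;> simp_all
    rintro rfl; exact hi h1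
  -- before i σ = S ↔ f ∘ σ = g
  have key : ∀ σ : Equiv.Perm (Fin n), before i σ = S ↔ f ∘ σ = g := by
    intro σ
    constructor
    · intro h
      have hsymm : (σ.symm i : ℕ) = k := by rw [← card_before i σ, h]
      have hmem : ∀ j : Fin n, j ∈ S ↔ σ.symm j < σ.symm i := by
        intro j
        rw [← h]
        simp [before]
      funext x
      rcases lt_trichotomy (x : ℕ) k with hx | hx | hx
      · have : σ x ∈ S := by
          rw [hmem]
          simp only [Equiv.symm_apply_apply]
          rw [Fin.lt_def, hsymm]; exact hx
        rw [Function.comp_apply, (hf0 _).2 this, eq_comm, hg0]; exact hx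
      · have : σ x = i := by
          have : x = σ.symm i := by
            apply Fin.ext; rw [hsymm]; exact hx
          rw [this, Equiv.apply_symm_apply]
        rw [Function.comp_apply, (hf1 _).2 this, eq_comm, hg1]; exact hx
      · have h1 : σ x ∉ S := by
          rw [hmem]
          simp only [Equiv.symm_apply_apply]
          rw [Fin.lt_def, hsymm]; omega
        have h2 : σ x ≠ i := by
          intro he
          have : x = σ.symm i := by rw [← he, Equiv.symm_apply_apply]
          rw [this] at hx; omega
        simp only [Function.comp_apply, hf, hg, if_neg h1, if_neg h2]
        rw [eq_comm, if_neg (by omega), if_neg (by omega)]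
    · intro h
      have happ : ∀ x : Fin n, f (σ x) = g x := fun x => congrFun h x
      have hsymm : σ.symm i = ⟨k, hkn⟩ := by
        have : f (σ ⟨k, hkn⟩) = g ⟨k, hkn⟩ := happ _
        rw [(hg1 _).2 rfl] at this
        rw [← (hf1 _).1 this, Equiv.symm_apply_apply]
      ext j
      simp only [before, mem_filter, mem_univ, true_and]
      have hj0 : f j = g (σ.symm j) := by
        conv_lhs => rw [← Equiv.apply_symm_apply σ j]
        exact happ _
      rw [← hf0 j, hj0, hg0, hsymm, Fin.lt_def]
  -- fiber cardinalities
  have cf0 : Fintype.card {a : Fin n // f a = 0} = k := by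
    rw [Fintype.card_congr (Equiv.subtypeEquivRight hf0)]
    exact Fintype.card_coe S
  have cf1 : Fintype.card {a : Fin n // f a = 1} = 1 := by
    rw [Fintype.card_congr (Equiv.subtypeEquivRight hf1)]
    exact Fintype.card_subtype_eq i
  have hf2 : ∀ a : Fin n, f a = 2 ↔ ¬ (a ∈ insert i S) := by
    intro a
    simp only [hf, Finset.mem_insert]
    split_ifs with h1 h2 <;> simp_all
  have cf2 : Fintype.card {a : Fin n // f a = 2} = n - 1 - k := by
    rw [Fintype.card_congr (Equiv.subtypeEquivRight hf2), Fintype.card_subtype_compl,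
      Fintype.card_coe, Fintype.card_fin, Finset.card_insert_of_notMem hi]
    omega
  have cg0 : Fintype.card {x : Fin n // g x = 0} = k := by
    rw [Fintype.card_congr (Equiv.subtypeEquivRight hg0), Fintype.card_subtype]
    rw [show Finset.univ.filter (fun x : Fin n => (x : ℕ) < k) = Finset.Iio ⟨k, hkn⟩ by
      ext x; simp [Fin.lt_def]]
    exact Fin.card_Iio _
  have cg1 : Fintype.card {x : Fin n // g x = 1} = 1 := by
    have h' : ∀ x : Fin n, g x = 1 ↔ x = ⟨k, hkn⟩ := by
      intro x; rw [hg1, Fin.ext_iff]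
    rw [Fintype.card_congr (Equiv.subtypeEquivRight h')]
    exact Fintype.card_subtype_eq _
  have hg2 : ∀ x : Fin n, g x = 2 ↔ ¬ (x ≤ (⟨k, hkn⟩ : Fin n)) := by
    intro x
    simp only [hg, Fin.le_def]
    split_ifs with h1 h2 <;> simp_all <;> omega
  have cgle : Fintype.card {x : Fin n // x ≤ (⟨k, hkn⟩ : Fin n)} = k + 1 := by
    rw [Fintype.card_subtype]
    rw [show Finset.univ.filter (fun x : Fin n => x ≤ (⟨k, hkn⟩ : Fin n)) = Finset.Iic ⟨k, hkn⟩ by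
      ext x; simp]
    rw [Fin.card_Iic]
  have cg2 : Fintype.card {x : Fin n // g x = 2} = n - 1 - k := by
    rw [Fintype.card_congr (Equiv.subtypeEquivRight hg2), Fintype.card_subtype_compl,
      Fintype.card_fin, cgle]
    omega
  have hcards : ∀ j : Fin 3, Fintype.card {x : Fin n // g x = j} = Fintype.card {a : Fin n // f a = j} := by
    intro j
    fin_cases j
    · exact cg0.trans cf0.symm
    · exact cg1.trans cf1.symm
    · exact cg2.trans cf2.symm
  set e : ∀ j : Fin 3, {x : Fin n // g x = j} ≃ {a : Fin n // f a = j} :=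
    fun j => Fintype.equivOfCardEq (hcards j) with he
  have aux : ∀ (j j' : Fin 3) (_ : j = j') (x : {x : Fin n // g x = j}) (y : {y : Fin n // g y = j'}),
      ((e j x : Fin n) = (e j' y : Fin n)) → (x : Fin n) = (y : Fin n) := by
    rintro j _ rfl x y hxy
    rw [(e j).injective (Subtype.ext hxy)]
  have hinj : Function.Injective (fun x : Fin n => ((e (g x)) ⟨x, rfl⟩ : Fin n)) := by
    intro a b hab
    have hga : f ((e (g a)) ⟨a, rfl⟩ : Fin n) = g a := ((e (g a)) ⟨a, rfl⟩).2
    have hgb : f ((e (g b)) ⟨b, rfl⟩ : Fin n) = g b := ((e (g b)) ⟨b, rfl⟩).2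
    have hab' : ((e (g a)) ⟨a, rfl⟩ : Fin n) = ((e (g b)) ⟨b, rfl⟩ : Fin n) := hab
    have hgab : g a = g b := by rw [← hga, ← hgb, hab']
    exact aux (g a) (g b) hgab ⟨a, rfl⟩ ⟨b, rfl⟩ hab'
  set σ₀ : Equiv.Perm (Fin n) := Equiv.ofBijective _ (Finite.injective_iff_bijective.1 hinj)
    with hσ₀def
  have hσ₀ : f ∘ σ₀ = g := by
    funext x
    exact ((e (g x)) ⟨x, rfl⟩).2
  have hcard1 : (Finset.univ.filter (fun σ : Equiv.Perm (Fin n) => before i σ = S)).card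
      = Fintype.card {σ : Equiv.Perm (Fin n) // f ∘ ⇑σ = g} := by
    rw [Fintype.card_subtype]
    apply Finset.card_bij (fun σ _ => σ)
    · intro σ hσ
      simp only [mem_filter, mem_univ, true_and] at hσ ⊢
      exact (key σ).1 hσ
    · exact fun _ _ _ _ h => h
    · intro σ hσ
      simp only [mem_filter, mem_univ, true_and] at hσ
      exact ⟨σ, by simp only [mem_filter, mem_univ, true_and]; exact (key σ).2 hσ, rfl⟩
  have eqv : {σ : Equiv.Perm (Fin n) // f ∘ ⇑σ = g} ≃ {τ : Equiv.Perm (Fin n) // f ∘ ⇑τ = f} :=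
    { toFun := fun σ => ⟨σ₀.symm.trans σ.1, by
        funext x
        have h1 : f (σ.1 (σ₀.symm x)) = g (σ₀.symm x) := congrFun σ.2 _
        have h2 : f (σ₀ (σ₀.symm x)) = g (σ₀.symm x) := congrFun hσ₀ _
        simp only [Function.comp_apply, Equiv.trans_apply]
        rw [h1, ← h2, Equiv.apply_symm_apply]⟩
      invFun := fun τ => ⟨σ₀.trans τ.1, by
        funext x
        have h1 : f (τ.1 (σ₀ x)) = f (σ₀ x) := congrFun τ.2 _
        have h2 : f (σ₀ x) = g x := congrFun hσ₀ _
        simp only [Function.comp_apply, Equiv.trans_apply]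
        rw [h1, h2]⟩
      left_inv := fun σ => by
        apply Subtype.ext; ext x; simp
      right_inv := fun τ => by
        apply Subtype.ext; ext x; simp }
  rw [hcard1, Fintype.card_congr eqv, DomMulAct.stabilizer_card f, Fin.prod_univ_three,
    cf0, cf1, cf2]
  simp [Nat.factorial_one]

end Cnt

open Finset in
lemma Cnt.sum_perm {n : ℕ} (i : Fin n) (F : Finset (Fin n) → ℝ) :
    ∑ σ : Equiv.Perm (Fin n), F (before i σ)
      = ∑ S ∈ (Finset.univ.erase i).powerset,
          ((Nat.factorial S.card * Nat.factorial (n - 1 - S.card) : ℕ) : ℝ) * F S := by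
  rw [← Finset.sum_fiberwise_of_maps_to
    (fun σ _ => Finset.mem_powerset.2 (Cnt.before_subset i σ)) (fun σ => F (before i σ))]
  apply Finset.sum_congr rfl
  intro S hS
  rw [Finset.sum_congr rfl (fun σ hσ => by rw [(Finset.mem_filter.1 hσ).2]),
    Finset.sum_const, Cnt.card_fiber i S (Finset.mem_powerset.1 hS), nsmul_eq_mul]

lemma sum_sq {X : Type*} [Fintype X] (h : X → ℝ) (h0 : ∑ x : X, h x = 0) (m : ℕ) :
    (Fintype.card X : ℝ) * ∑ f : Fin m → X, (∑ j, h (f j))^2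
      = (Fintype.card X : ℝ)^m * m * ∑ x : X, (h x)^2 := by
  induction m with
  | zero => simp
  | succ m ih =>
    classical
    have hcard : ((Finset.univ : Finset (Fin m → X)).card : ℝ) = (Fintype.card X : ℝ)^m := by
      rw [Finset.card_univ, Fintype.card_fun]
      push_cast [Fintype.card_fin]
      ring
    have step : ∑ f : Fin (m+1) → X, (∑ j, h (f j))^2
        = ∑ p : X × (Fin m → X), (h p.1 + ∑ j, h (p.2 j))^2 := by
      rw [← Equiv.sum_comp (Fin.consEquiv (fun _ : Fin (m+1) => X))
        (fun f : Fin (m+1) → X => (∑ j, h (f j))^2)]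
      apply Fintype.sum_congr
      intro p
      congr 1
      rw [Fin.sum_univ_succ]
      simp
    rw [step, Fintype.sum_prod_type]
    have expand : ∀ a : X, ∑ f : Fin m → X, (h a + ∑ j, h (f j))^2
        = (Fintype.card X : ℝ)^m * (h a)^2
          + (2 * (∑ f : Fin m → X, ∑ j, h (f j))) * h a
          + ∑ f : Fin m → X, (∑ j, h (f j))^2 := by
      intro a
      calc ∑ f : Fin m → X, (h a + ∑ j, h (f j))^2
          = ∑ f : Fin m → X, ((h a)^2 + (2 * (∑ j, h (f j))) * h a + (∑ j, h (f j))^2) :=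
            Finset.sum_congr rfl (fun f _ => by ring)
        _ = _ := by
            rw [Finset.sum_add_distrib, Finset.sum_add_distrib, Finset.sum_const, nsmul_eq_mul,
              hcard, ← Finset.sum_mul]
            congr 2
            rw [Finset.mul_sum]
    rw [Finset.sum_congr rfl (fun a _ => expand a), Finset.sum_add_distrib,
      Finset.sum_add_distrib, ← Finset.mul_sum, ← Finset.mul_sum, h0, mul_zero,
      Finset.sum_const, nsmul_eq_mul, Finset.card_univ]
    push_cast
    linear_combination (Fintype.card X : ℝ) * ih

set_option maxHeartbeats 1000000 in
/-- Sampling `m = ⌈4 n² (n-1)² / ε²⌉` independent uniformly random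
permutations and averaging `n!` times the marginal contribution of `i` yields, with probability
at least `3/4`, an estimate within a multiplicative factor `ε` of `κ_i`. -/
theorem sampling_concentration (n : ℕ) (hn : 2 ≤ n)
    (E : Finset (Sym2 (Fin n))) (w : Sym2 (Fin n) → ℝ)
    (hloop : ∀ e ∈ E, ¬ e.IsDiag) (hw : ∀ e ∈ E, 0 ≤ w e)
    (i : Fin n) (hinc : ∃ e ∈ E, i ∈ e ∧ 0 < w e)
    (κ : ℝ) (hκ : κ = rawShapley Finset.univ (matchVal E w) i)
    (ε : ℝ) (hε : 0 < ε)
    (m : ℕ) (hm : m = ⌈4 * (n : ℝ) ^ 2 * ((n : ℝ) - 1) ^ 2 / ε ^ 2⌉₊)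
    (estimate : (Fin m → Equiv.Perm (Fin n)) → ℝ)
    (hest : ∀ f, estimate f = (1 / (m : ℝ)) * ∑ j : Fin m, (Nat.factorial n : ℝ) *
      (matchVal E w (insert i (before i (f j))) - matchVal E w (before i (f j)))) :
    (((Finset.univ.filter
        (fun f : Fin m → Equiv.Perm (Fin n) => ε * κ ≤ |estimate f - κ|)).card : ℝ) /
      (Fintype.card (Fin m → Equiv.Perm (Fin n)) : ℝ)) ≤ 1 / 4 := by

  classical
  have hn1 : (1:ℝ) ≤ (n:ℝ) - 1 := by
    have h2 : (2:ℝ) ≤ (n:ℝ) := by exact_mod_cast hn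
    linarith
  have hnpos : (0:ℝ) < (n:ℝ) := by linarith
  have hm0 : 0 < m := by
    rw [hm]
    apply Nat.ceil_pos.2
    positivity
  have hmR : (0:ℝ) < (m:ℝ) := by exact_mod_cast hm0
  -- maximum incident edge weight
  set I := E.filter (fun e => i ∈ e) with hI
  have hIne : I.Nonempty := by
    obtain ⟨e, he, hie, _⟩ := hinc
    exact ⟨e, Finset.mem_filter.2 ⟨he, hie⟩⟩
  set W := I.sup' hIne w with hWdef
  have hWle : ∀ e ∈ E, i ∈ e → w e ≤ W := fun e he hie =>
    Finset.le_sup' w (Finset.mem_filter.2 ⟨he, hie⟩)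
  have hW0 : 0 < W := by
    obtain ⟨e, he, hie, hwe⟩ := hinc
    exact lt_of_lt_of_le hwe (hWle e he hie)
  obtain ⟨e₀, he₀I, hWe₀⟩ := Finset.exists_mem_eq_sup' hIne w
  have he₀E : e₀ ∈ E := (Finset.mem_filter.1 he₀I).1
  have hie₀ : i ∈ e₀ := (Finset.mem_filter.1 he₀I).2
  set j₀ := Sym2.Mem.other hie₀ with hj₀
  have he₀ : e₀ = s(i, j₀) := (Sym2.other_spec hie₀).symm
  have hij : j₀ ≠ i := by
    intro hji
    apply hloop e₀ he₀E
    rw [he₀, hji]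
    simp [Sym2.isDiag_iff_proj_eq]
  set v := matchVal E w with hv
  have hpair : W ≤ v {i, j₀} := by
    have hmatch : IsMatchingOn E {i, j₀} {e₀} := by
      refine ⟨Finset.singleton_subset_iff.2 he₀E, ?_, ?_, ?_⟩
      · intro e he
        rw [Finset.mem_singleton] at he
        subst he
        exact hloop _ he₀E
      · intro e he x hx
        rw [Finset.mem_singleton] at he
        subst he
        rw [he₀] at hx
        rcases Sym2.mem_iff.1 hx with rfl | rfl <;> simp
      · intro e he f hf hef
        rw [Finset.mem_singleton] at he hf
        exact absurd (he.trans hf.symm) hef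
    have hle := MVal.le_matchVal E w {i, j₀} hmatch
    rw [Finset.sum_singleton] at hle
    rw [hWdef, hWe₀, hv]
    exact hle
  -- κ is positive and dominates (n-2)! * W
  have hterm_nonneg : ∀ S ∈ ((Finset.univ : Finset (Fin n)).erase i).powerset,
      0 ≤ (Nat.factorial S.card : ℝ) *
        (Nat.factorial ((Finset.univ : Finset (Fin n)).card - S.card - 1) : ℝ) *
        (v (insert i S) - v S) := by
    intro S _
    have hmono := MVal.matchVal_mono E w S i
    apply mul_nonneg (mul_nonneg (by positivity) (by positivity))
    rw [hv]
    linarith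
  have hj₀mem : ({j₀} : Finset (Fin n)) ∈ ((Finset.univ : Finset (Fin n)).erase i).powerset := by
    simp [hij]
  have hsingle : (Nat.factorial (n - 2) : ℝ) * W ≤
      (Nat.factorial ({j₀} : Finset (Fin n)).card : ℝ) *
        (Nat.factorial ((Finset.univ : Finset (Fin n)).card - ({j₀} : Finset (Fin n)).card - 1) : ℝ) *
        (v (insert i {j₀}) - v {j₀}) := by
    have h0 : v {j₀} = 0 := MVal.matchVal_singleton E w hloop j₀
    have hins : insert i ({j₀} : Finset (Fin n)) = {i, j₀} := rfl
    rw [Finset.card_singleton, hins, h0, sub_zero, Finset.card_univ, Fintype.card_fin,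
      show n - 1 - 1 = n - 2 from by omega, Nat.factorial_one, Nat.cast_one, one_mul]
    exact mul_le_mul_of_nonneg_left hpair (by positivity)
  have hκ1 : (Nat.factorial (n - 2) : ℝ) * W ≤ κ := by
    rw [hκ, rawShapley]
    exact hsingle.trans (Finset.single_le_sum hterm_nonneg hj₀mem)
  have hκpos : 0 < κ := lt_of_lt_of_le (by positivity) hκ1
  have hfact : ((n.factorial : ℕ) : ℝ) = (n:ℝ) * ((n:ℝ) - 1) * ((n - 2).factorial : ℝ) := by
    obtain ⟨k, rfl⟩ : ∃ k, n = k + 2 := ⟨n - 2, by omega⟩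
    rw [show k + 2 - 2 = k from rfl, show k + 2 = (k + 1) + 1 from rfl,
      Nat.factorial_succ, Nat.factorial_succ]
    push_cast
    ring
  have hnW : ((n.factorial : ℕ) : ℝ) * W ≤ (n:ℝ) * ((n:ℝ) - 1) * κ := by
    rw [hfact]
    calc (n:ℝ) * ((n:ℝ) - 1) * ((n - 2).factorial : ℝ) * W
        = (n:ℝ) * ((n:ℝ) - 1) * (((n - 2).factorial : ℝ) * W) := by ring
      _ ≤ (n:ℝ) * ((n:ℝ) - 1) * κ := by
          apply mul_le_mul_of_nonneg_left hκ1
          nlinarith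
  -- the single-sample function and its bounds
  set g : Equiv.Perm (Fin n) → ℝ :=
    fun σ => (Nat.factorial n : ℝ) * (v (insert i (before i σ)) - v (before i σ)) with hgdef
  have hg0 : ∀ σ, 0 ≤ g σ := by
    intro σ
    have hmono := MVal.matchVal_mono E w (before i σ) i
    apply mul_nonneg (by positivity)
    rw [hv]
    linarith
  have hgW : ∀ σ, g σ ≤ ((n.factorial : ℕ) : ℝ) * W := by
    intro σ
    apply mul_le_mul_of_nonneg_left _ (by positivity)
    rw [hv]
    exact MVal.marginal_le E w (before i σ) hw i W hWle hW0.le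
  -- expectation of g
  have hEg : ∑ σ : Equiv.Perm (Fin n), g σ = ((n.factorial : ℕ) : ℝ) * κ := by
    rw [hκ, rawShapley, hgdef]
    simp only
    rw [← Finset.mul_sum]
    congr 1
    rw [Cnt.sum_perm i (fun S => v (insert i S) - v S)]
    apply Finset.sum_congr rfl
    intro S hS
    rw [Finset.card_univ, Fintype.card_fin,
      show n - S.card - 1 = n - 1 - S.card from by omega]
    push_cast
    ring
  set C := (Fintype.card (Equiv.Perm (Fin n)) : ℝ) with hCdef
  have hC : C = ((n.factorial : ℕ) : ℝ) := by
    rw [hCdef]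
    norm_cast
    rw [Fintype.card_perm, Fintype.card_fin]
  have hCpos : 0 < C := by
    rw [hC]
    positivity
  set h : Equiv.Perm (Fin n) → ℝ := fun σ => g σ - κ with hhdef
  have hh0 : ∑ σ : Equiv.Perm (Fin n), h σ = 0 := by
    rw [hhdef]
    simp only
    rw [Finset.sum_sub_distrib, hEg, Finset.sum_const, Finset.card_univ, nsmul_eq_mul, ← hCdef,
      hC]
    ring
  set Vs := ∑ σ : Equiv.Perm (Fin n), (h σ)^2 with hVs
  have hVbound : Vs ≤ (n:ℝ) * ((n:ℝ) - 1) * C * κ^2 := by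
    have hsq : ∀ σ : Equiv.Perm (Fin n), (h σ)^2 = (g σ)^2 - 2*κ*(g σ) + κ^2 := by
      intro σ
      rw [hhdef]
      ring
    have h1 : Vs = (∑ σ : Equiv.Perm (Fin n), (g σ)^2)
        - 2*κ*(∑ σ : Equiv.Perm (Fin n), g σ) + C*κ^2 := by
      rw [hVs, Finset.sum_congr rfl (fun σ _ => hsq σ), Finset.sum_add_distrib,
        Finset.sum_sub_distrib, ← Finset.mul_sum, Finset.sum_const, Finset.card_univ,
        nsmul_eq_mul, ← hCdef]
    have h2 : ∑ σ : Equiv.Perm (Fin n), (g σ)^2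
        ≤ (((n.factorial : ℕ) : ℝ) * W) * ∑ σ : Equiv.Perm (Fin n), g σ := by
      rw [Finset.mul_sum]
      apply Finset.sum_le_sum
      intro σ _
      have ha := hgW σ
      have hb := hg0 σ
      nlinarith
    have h3 : (((n.factorial : ℕ) : ℝ) * W) * ∑ σ : Equiv.Perm (Fin n), g σ
        ≤ ((n:ℝ) * ((n:ℝ) - 1) * κ) * (((n.factorial : ℕ) : ℝ) * κ) := by
      rw [hEg]
      exact mul_le_mul_of_nonneg_right hnW (by positivity)
    have h4 := h2.trans h3
    rw [h1, hEg, hC]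
    have hf0 : (0:ℝ) ≤ ((n.factorial : ℕ) : ℝ) := by positivity
    have hf1 : (0:ℝ) ≤ ((n.factorial : ℕ) : ℝ) * κ^2 := mul_nonneg hf0 (sq_nonneg κ)
    nlinarith [h4, hf1]
  -- rewrite the estimate difference
  have hdiff : ∀ f : Fin m → Equiv.Perm (Fin n),
      estimate f - κ = (1/(m:ℝ)) * ∑ j : Fin m, h (f j) := by
    intro f
    rw [hest f]
    have hb : ∀ j : Fin m, (Nat.factorial n : ℝ) *
        (v (insert i (before i (f j))) - v (before i (f j))) = g (f j) := fun j => rfl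
    rw [Finset.sum_congr rfl (fun j _ => hb j)]
    have hc : ∑ j : Fin m, h (f j) = (∑ j : Fin m, g (f j)) - (m:ℝ)*κ := by
      rw [hhdef]
      simp only
      rw [Finset.sum_sub_distrib, Finset.sum_const, Finset.card_univ, Fintype.card_fin,
        nsmul_eq_mul]
    rw [hc]
    field_simp
  -- Markov / Chebyshev
  set P := (Finset.univ.filter
      (fun f : Fin m → Equiv.Perm (Fin n) => ε * κ ≤ |estimate f - κ|)).card with hPdef
  set Q := ∑ f : Fin m → Equiv.Perm (Fin n), (∑ j : Fin m, h (f j))^2 with hQdef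
  have hMar : (P:ℝ) * (ε*κ)^2 ≤ ∑ f : Fin m → Equiv.Perm (Fin n), (estimate f - κ)^2 := by
    calc (P:ℝ) * (ε*κ)^2
        = ∑ _f ∈ Finset.univ.filter
            (fun f : Fin m → Equiv.Perm (Fin n) => ε * κ ≤ |estimate f - κ|), (ε*κ)^2 := by
          rw [Finset.sum_const, nsmul_eq_mul, hPdef]
      _ ≤ ∑ f ∈ Finset.univ.filter
            (fun f : Fin m → Equiv.Perm (Fin n) => ε * κ ≤ |estimate f - κ|),
            (estimate f - κ)^2 := by
          apply Finset.sum_le_sum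
          intro f hf
          have hf' := (Finset.mem_filter.1 hf).2
          have h1 : (0:ℝ) ≤ ε*κ := by positivity
          calc (ε*κ)^2 ≤ |estimate f - κ|^2 := by
                exact pow_le_pow_left₀ h1 hf' 2
            _ = (estimate f - κ)^2 := sq_abs _
      _ ≤ ∑ f : Fin m → Equiv.Perm (Fin n), (estimate f - κ)^2 :=
          Finset.sum_le_sum_of_subset_of_nonneg (Finset.filter_subset _ _)
            (fun f _ _ => sq_nonneg _)
  have hsum2 : ∑ f : Fin m → Equiv.Perm (Fin n), (estimate f - κ)^2 = (1/(m:ℝ))^2 * Q := by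
    rw [hQdef, Finset.mul_sum]
    apply Finset.sum_congr rfl
    intro f _
    rw [hdiff f]
    ring
  have hQeq : C * Q = C^m * (m:ℝ) * Vs := sum_sq h hh0 m
  have hQ0 : 0 ≤ Q := Finset.sum_nonneg (fun f _ => sq_nonneg _)
  have hΩ : (Fintype.card (Fin m → Equiv.Perm (Fin n)) : ℝ) = C^m := by
    rw [hCdef, Fintype.card_fun, Fintype.card_fin]
    push_cast
    ring
  rw [hΩ, div_le_div_iff₀ (by positivity) (by norm_num : (0:ℝ) < 4)]
  -- final arithmetic
  have key : (P:ℝ) * (ε*κ)^2 * ((m:ℝ)^2 * C) ≤ C^m * (m:ℝ) * Vs := by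
    have h1 : (P:ℝ) * (ε*κ)^2 ≤ (1/(m:ℝ))^2 * Q := hMar.trans (le_of_eq hsum2)
    have h2 := mul_le_mul_of_nonneg_right h1 (show (0:ℝ) ≤ (m:ℝ)^2 * C by positivity)
    calc (P:ℝ) * (ε*κ)^2 * ((m:ℝ)^2 * C) ≤ (1/(m:ℝ))^2 * Q * ((m:ℝ)^2 * C) := h2
      _ = C * Q := by
          field_simp
      _ = C^m * (m:ℝ) * Vs := hQeq
  have key2 : (P:ℝ) * (ε*κ)^2 * ((m:ℝ)^2 * C)
      ≤ C^m * (m:ℝ) * ((n:ℝ) * ((n:ℝ) - 1) * C * κ^2) := by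
    refine key.trans ?_
    apply mul_le_mul_of_nonneg_left hVbound (by positivity)
  have hcancel : (P:ℝ) * ε^2 * (m:ℝ) ≤ C^m * ((n:ℝ) * ((n:ℝ) - 1)) := by
    apply le_of_mul_le_mul_right _ (show (0:ℝ) < κ^2 * (m:ℝ) * C by positivity)
    calc (P:ℝ) * ε^2 * (m:ℝ) * (κ^2 * (m:ℝ) * C) = (P:ℝ) * (ε*κ)^2 * ((m:ℝ)^2 * C) := by ring
      _ ≤ C^m * (m:ℝ) * ((n:ℝ) * ((n:ℝ) - 1) * C * κ^2) := key2
      _ = C^m * ((n:ℝ) * ((n:ℝ) - 1)) * (κ^2 * (m:ℝ) * C) := by ring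
  have hmeps : 4 * (n:ℝ)^2 * ((n:ℝ) - 1)^2 ≤ (m:ℝ) * ε^2 := by
    have h5 := Nat.le_ceil (4 * (n:ℝ)^2 * ((n:ℝ) - 1)^2 / ε^2)
    rw [← hm] at h5
    rw [div_le_iff₀ (by positivity)] at h5
    linarith
  have hP0 : (0:ℝ) ≤ (P:ℝ) := Nat.cast_nonneg _
  have hCm : (0:ℝ) < C^m := by positivity
  have hX : (1:ℝ) ≤ (n:ℝ) * ((n:ℝ) - 1) := by nlinarith
  have hfin : (P:ℝ) * (4 * (n:ℝ)^2 * ((n:ℝ) - 1)^2) ≤ C^m * ((n:ℝ) * ((n:ℝ) - 1)) := by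
    calc (P:ℝ) * (4 * (n:ℝ)^2 * ((n:ℝ) - 1)^2) ≤ (P:ℝ) * ((m:ℝ) * ε^2) :=
          mul_le_mul_of_nonneg_left hmeps hP0
      _ = (P:ℝ) * ε^2 * (m:ℝ) := by ring
      _ ≤ C^m * ((n:ℝ) * ((n:ℝ) - 1)) := hcancel
  have hX0 : (0:ℝ) < (n:ℝ) * ((n:ℝ) - 1) := lt_of_lt_of_le one_pos hX
  have step1 : (P:ℝ) * 4 * ((n:ℝ) * ((n:ℝ) - 1)) ≤ C^m := by
    apply le_of_mul_le_mul_right _ hX0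
    calc (P:ℝ) * 4 * ((n:ℝ) * ((n:ℝ) - 1)) * ((n:ℝ) * ((n:ℝ) - 1))
        = (P:ℝ) * (4 * (n:ℝ)^2 * ((n:ℝ) - 1)^2) := by ring
      _ ≤ C^m * ((n:ℝ) * ((n:ℝ) - 1)) := hfin
  have step2 : (P:ℝ) * 4 ≤ (P:ℝ) * 4 * ((n:ℝ) * ((n:ℝ) - 1)) :=
    le_mul_of_one_le_right (mul_nonneg hP0 (by norm_num)) hX
  rw [one_mul]
  exact step2.trans step1
end
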